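/- arXiv:1706.00611 — 6 statements merged into one kernel-verified Lean document; each statement's English description precedes it below -/
import Mathlib

section
/- Let L and S be positive integers with 2^S dividing L, let 𝒦 be a finite set of keys with |𝒦| ≥ S, and let a : 𝒦 → Fin L → {0,1} be a family of binary sequences such that for every integer s with 2 ≤ s ≤ S, all distinct keys k₁,…,k_s ∈ 𝒦 and all bits b₁,…,b_s ∈ {0,1}, the pattern count #{i ∈ Fin L : a(k₁)(i)=b₁, …, a(k_s)(i)=b_s} equals L/2^s. Fix an integer s with 2 ≤ s ≤ S and a real γ with 0 < γ ≤ 1 such that n = γL is an integer, let T ⊆ Fin L with |T| = n, and let g : Fin L → {0,1} be an arbitrary guessing function. Let r be the unique integer ≥ −1 with P_s(r) ≤ γ/2 < P_s(r+1), and set n_correct(γ) = L·[P_{s−1}(r) + ((s−r−1)/s)·(γ − 2·P_s(r))]. Then the number of keys k ∈ 𝒦 with #{i ∈ T : g(i) = a(k)(i)} > n_correct(γ) is at most s − 1; equivalently, a uniformly random key k ∈ 𝒦 satisfies #{i ∈ T : g(i) = a(k)(i)} ≤ n_correct(γ) with probability at least 1 − s/|𝒦|. -/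
open Finset

/-- Cumulative distribution function of the binomial distribution with `s` trials and
success probability `1/2`: `P_s(t) = 2^{-s} ∑_{j=0}^{t} C(s,j)` for `t ≥ 0`, and `0` for `t < 0`. -/
noncomputable def binomCDF (s : ℕ) (t : ℤ) : ℝ :=
  if t < 0 then 0 else (∑ j ∈ Finset.range (t.toNat + 1), (s.choose j : ℝ)) / 2 ^ s

lemma stmt0_aux_L1 (s j : ℕ) : (s - j) * s.choose j = s * (s-1).choose j := by
  rcases Nat.eq_zero_or_pos s with h | h
  · subst h; rcases j with _ | j <;> simp
  · obtain ⟨m, rfl⟩ := Nat.exists_eq_add_of_lt h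
    simp only [Nat.zero_add, Nat.add_sub_cancel]
    rw [mul_comm, ← Nat.choose_succ_right_eq, ← Nat.add_one_mul_choose_eq]

lemma stmt0_aux_L2 (f : ℕ → ℕ) (t : ℕ) :
    ∑ u ∈ range (t+1), ∑ j ∈ range (u+1), f j = ∑ j ∈ range (t+1), (t+1-j) * f j := by
  induction t with
  | zero => simp
  | succ t ih =>
    rw [Finset.sum_range_succ, ih, Finset.sum_range_succ (fun j => (t+2-j)*f j)]
    have h1 : ∑ j ∈ range (t+1), (t+2-j) * f j = ∑ j ∈ range (t+1), ((t+1-j)*f j + f j) := by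
      apply Finset.sum_congr rfl
      intro j hj
      simp only [Finset.mem_range] at hj
      have : t + 2 - j = (t+1-j) + 1 := by omega
      rw [this, add_mul, one_mul]
    rw [h1, Finset.sum_add_distrib, Finset.sum_range_succ f]
    have : t + 2 - (t+1) = 1 := by omega
    rw [this, one_mul]
    omega

lemma stmt0_aux_L3 (s t : ℕ) (hs : t + 1 ≤ s) :
    ∑ u ∈ range (t+1), ∑ j ∈ range (u+1), s.choose j
      + (s - t - 1) * ∑ j ∈ range (t+1), s.choose j
    = s * ∑ j ∈ range (t+1), (s-1).choose j := by
  rw [stmt0_aux_L2, Finset.mul_sum, Finset.mul_sum, ← Finset.sum_add_distrib]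
  apply Finset.sum_congr rfl
  intro j hj
  simp only [Finset.mem_range] at hj
  rw [← stmt0_aux_L1 s j]
  have : (t+1-j) + (s-t-1) = s - j := by omega
  rw [← add_mul, this]

lemma stmt0_aux_L4 (s t : ℕ) (h : s ≤ 2*t) (hs : 0 < s) : 2^s < 2 * ∑ j ∈ range (t+1), s.choose j := by
  have hp : 0 < 2^s := Nat.two_pow_pos s
  rcases le_or_gt s t with h' | h'
  · have : ∑ j ∈ range (s+1), s.choose j ≤ ∑ j ∈ range (t+1), s.choose j := by
      apply Finset.sum_le_sum_of_subset
      exact Finset.range_subset_range.2 (by omega)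
    rw [Nat.sum_range_choose] at this
    omega
  · have hsym : ∑ j ∈ Finset.Ico (t+1) (s+1), s.choose j = ∑ j ∈ range (s-t), s.choose j := by
      apply Finset.sum_nbij' (fun j => s - j) (fun j => s - j)
      · intro x hx; simp only [Finset.mem_Ico, Finset.mem_range] at *; omega
      · intro x hx; simp only [Finset.mem_Ico, Finset.mem_range] at *; omega
      · intro x hx; simp only [Finset.mem_Ico] at hx; omega
      · intro x hx; simp only [Finset.mem_range] at hx; omega
      · intro x hx; simp only [Finset.mem_Ico] at hx
        rw [Nat.choose_symm (by omega)]
    have hsplit : ∑ j ∈ range (s+1), s.choose j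
        = ∑ j ∈ range (t+1), s.choose j + ∑ j ∈ Finset.Ico (t+1) (s+1), s.choose j := by
      rw [Finset.range_eq_Ico, ← Finset.sum_Ico_consecutive _ (Nat.zero_le (t+1)) (by omega : t+1 ≤ s+1), Finset.range_eq_Ico]
    have hdisj : Disjoint (range (s-t)) ({t} : Finset ℕ) :=
      Finset.disjoint_singleton_right.2 (by simp only [Finset.mem_range]; omega)
    have hsub : ∑ j ∈ range (s-t), s.choose j + s.choose t ≤ ∑ j ∈ range (t+1), s.choose j := by
      have h1 : ∑ j ∈ range (s-t), s.choose j + s.choose t = ∑ j ∈ range (s-t) ∪ {t}, s.choose j := by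
        rw [Finset.sum_union hdisj]
        simp
      rw [h1]
      apply Finset.sum_le_sum_of_subset
      intro x hx
      simp only [Finset.mem_union, Finset.mem_range, Finset.mem_singleton] at hx ⊢
      omega
    have hpos : 0 < s.choose t := Nat.choose_pos (by omega)
    rw [Nat.sum_range_choose] at hsplit
    omega

lemma stmt0_aux_L5 (s u : ℕ) :
    ((univ : Finset (Finset (Fin s))).filter fun M => s - u ≤ M.card).card
      = ∑ j ∈ range (u+1), s.choose j := by
  have hcompl : ∀ M : Finset (Fin s), M.card + Mᶜ.card = s := by
    intro M
    rw [Finset.card_compl]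
    have := Finset.card_le_univ M
    simp only [Finset.card_univ, Fintype.card_fin] at *
    omega
  have step1 : ((univ : Finset (Finset (Fin s))).filter fun M => s - u ≤ M.card).card
      = ((univ : Finset (Finset (Fin s))).filter fun M => M.card ≤ u).card := by
    apply Finset.card_nbij' (fun M => Mᶜ) (fun M => Mᶜ)
    · intro M hM
      simp only [Finset.mem_coe, Finset.mem_filter, Finset.mem_univ, true_and] at *
      have := hcompl M; omega
    · intro M hM
      simp only [Finset.mem_coe, Finset.mem_filter, Finset.mem_univ, true_and] at *
      have := hcompl M; omega
    · intro M _; simp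
    · intro M _; simp
  rw [step1]
  rw [Finset.card_eq_sum_card_fiberwise (f := fun M : Finset (Fin s) => M.card)
    (t := range (u+1)) (by intro M hM; simp only [Finset.mem_coe, Finset.mem_filter, Finset.mem_range] at *; omega)]
  apply Finset.sum_congr rfl
  intro m hm
  simp only [Finset.mem_range] at hm
  have h1 : ((univ : Finset (Finset (Fin s))).filter fun M => M.card ≤ u).filter
      (fun M => M.card = m) = Finset.powersetCard m (univ : Finset (Fin s)) := by
    ext M
    simp only [Finset.mem_filter, Finset.mem_univ, true_and, Finset.mem_powersetCard,
      Finset.subset_univ]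
    omega
  rw [h1, Finset.card_powersetCard, Finset.card_univ, Fintype.card_fin]

-- main counting lemma (at most s-1 keys exceed)
lemma stmt0_aux_Lmain {K : Type*} [Fintype K] (L S : ℕ) (hL : 0 < L) (hS : 0 < S)
    (hdvd : 2 ^ S ∣ L) (hK : S ≤ Fintype.card K)
    (a : K → Fin L → Bool)
    (hpatt : ∀ s : ℕ, 2 ≤ s → s ≤ S → ∀ ks : Fin s → K, Function.Injective ks →
      ∀ b : Fin s → Bool,
        (Finset.univ.filter (fun i : Fin L => ∀ j, a (ks j) i = b j)).card = L / 2 ^ s)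
    (s : ℕ) (hs2 : 2 ≤ s) (hsS : s ≤ S)
    (γ : ℝ) (hγ0 : 0 < γ) (hγ1 : γ ≤ 1)
    (n : ℕ) (hn : (n : ℝ) = γ * L)
    (T : Finset (Fin L)) (hT : T.card = n)
    (g : Fin L → Bool)
    (r : ℤ) (hr : -1 ≤ r)
    (hr1 : binomCDF s r ≤ γ / 2) (hr2 : γ / 2 < binomCDF s (r + 1)) :
    ∀ ks : Fin s → K, Function.Injective ks →
      ∃ j : Fin s, ((T.filter (fun i => g i = a (ks j) i)).card : ℝ) ≤
          L * (binomCDF (s - 1) r + ((s : ℝ) - r - 1) / s * (γ - 2 * binomCDF s r)) := by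
  classical
  intro ks hinj
  by_contra hcon
  push_neg at hcon
  set nc : ℝ := L * (binomCDF (s - 1) r + ((s : ℝ) - r - 1) / s * (γ - 2 * binomCDF s r)) with hnc
  -- case r = -1
  rcases eq_or_lt_of_le hr with hneg | hpos
  · have h1 : binomCDF s r = 0 := by rw [binomCDF, if_pos (by omega)]
    have h2 : binomCDF (s-1) r = 0 := by rw [binomCDF, if_pos (by omega)]
    have hncval : nc = γ * L := by
      rw [hnc, h1, h2, ← hneg]
      push_cast
      have : ((s:ℝ) - (-1) - 1) / s = 1 := by
        field_simp
        ring
      rw [this]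
      ring
    have := hcon ⟨0, by omega⟩
    have hle : ((T.filter (fun i => g i = a (ks ⟨0, by omega⟩) i)).card : ℝ) ≤ n := by
      have := Finset.card_le_card (Finset.filter_subset (fun i => g i = a (ks ⟨0, by omega⟩) i) T)
      rw [hT] at this
      exact_mod_cast this
    rw [hncval, ← hn] at this
    linarith
  -- main case r ≥ 0
  set t : ℕ := r.toNat with htdef
  have hrt : r = (t : ℤ) := by omega
  have hdvd' : 2^s ∣ L := dvd_trans (pow_dvd_pow 2 hsS) hdvd
  obtain ⟨q, hq⟩ := hdvd'
  have hQ : ∀ b : Fin s → Bool,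
      (Finset.univ.filter (fun i : Fin L => ∀ j, a (ks j) i = b j)).card = q := by
    intro b
    rw [hpatt s hs2 hsS ks hinj b, hq, Nat.mul_div_cancel_left _ (Nat.two_pow_pos s)]
  set Mset : Fin L → Finset (Fin s) := fun i => Finset.univ.filter fun j => g i = a (ks j) i
    with hMset
  set c : Fin L → ℕ := fun i => (Mset i).card with hc
  have hcs : ∀ i, c i ≤ s := by
    intro i
    have := Finset.card_filter_le (Finset.univ : Finset (Fin s)) (fun j => g i = a (ks j) i)
    simpa [hc, hMset] using this
  -- CDF values
  have hKt : binomCDF s r = ((∑ j ∈ range (t+1), s.choose j : ℕ) : ℝ) / 2^s := by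
    rw [binomCDF, if_neg (by omega)]
    push_cast
    rw [hrt]
    simp
  have hKt' : binomCDF (s-1) r = ((∑ j ∈ range (t+1), (s-1).choose j : ℕ) : ℝ) / 2^(s-1) := by
    rw [binomCDF, if_neg (by omega)]
    push_cast
    rw [hrt]
    simp
  -- 2t < s
  have h2t : 2 * t < s := by
    by_contra hx
    push_neg at hx
    have hL4 := stmt0_aux_L4 s t (by omega) (by omega)
    have : ((∑ j ∈ range (t+1), s.choose j : ℕ) : ℝ) ≤ 2^s / 2 := by
      rw [hKt] at hr1
      have h2pos : (0:ℝ) < 2^s := by positivity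
      rw [div_le_div_iff₀ h2pos (by norm_num)] at hr1
      nlinarith
    have h2 : ((2 * ∑ j ∈ range (t+1), s.choose j : ℕ) : ℝ) ≤ ((2^s : ℕ) : ℝ) := by
      push_cast at this ⊢
      linarith
    have h3 : (2 * ∑ j ∈ range (t+1), s.choose j : ℕ) ≤ 2^s := by exact_mod_cast h2
    omega
  -- the pairing lemma
  have hiff : ∀ (i : Fin L) (M' : Finset (Fin s)), Mset i = M' ↔ ∀ j, (g i = a (ks j) i ↔ j ∈ M') := by
    intro i M'
    rw [Finset.ext_iff]
    apply forall_congr'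
    intro j
    simp [hMset]
  have NM : ∀ M : Finset (Fin s),
      (Finset.univ.filter fun i : Fin L => Mset i = M).card
        + (Finset.univ.filter fun i : Fin L => Mset i = Mᶜ).card = 2*q := by
    intro M
    have j0 : Fin s := ⟨0, by omega⟩
    set β : Fin s → Bool := fun j => decide (j ∈ M) with hβ
    have hiff2 : ∀ (i : Fin L) (M' : Finset (Fin s)),
        Mset i = M' ↔ ∀ j, a (ks j) i = (g i == decide (j ∈ M')) := by
      intro i M'
      rw [hiff]
      apply forall_congr'
      intro j
      cases hg : g i <;> cases hA : a (ks j) i <;> by_cases hj : j ∈ M' <;>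
        simp [hg, hA, hj]
    have hMne : M ≠ Mᶜ := by
      intro h
      by_cases hj : j0 ∈ M
      · have : j0 ∈ Mᶜ := h ▸ hj
        simp [Finset.mem_compl] at this
        exact this hj
      · have : j0 ∈ Mᶜ := Finset.mem_compl.2 hj
        rw [← h] at this
        exact hj this
    have hdisj1 : Disjoint (Finset.univ.filter fun i : Fin L => Mset i = M)
        (Finset.univ.filter fun i : Fin L => Mset i = Mᶜ) := by
      rw [Finset.disjoint_left]
      intro i hi1 hi2
      simp only [Finset.mem_filter, Finset.mem_univ, true_and] at hi1 hi2
      exact hMne (hi1 ▸ hi2)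
    have hdisj2 : Disjoint (Finset.univ.filter fun i : Fin L => ∀ j, a (ks j) i = β j)
        (Finset.univ.filter fun i : Fin L => ∀ j, a (ks j) i = !(β j)) := by
      rw [Finset.disjoint_left]
      intro i hi1 hi2
      simp only [Finset.mem_filter, Finset.mem_univ, true_and] at hi1 hi2
      have h1 := hi1 j0
      have h2 := hi2 j0
      rw [h1] at h2
      simp at h2
    have step1 : (Finset.univ.filter fun i : Fin L => Mset i = M).card
        + (Finset.univ.filter fun i : Fin L => Mset i = Mᶜ).card
        = (Finset.univ.filter fun i : Fin L => Mset i = M ∨ Mset i = Mᶜ).card := by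
      rw [Finset.filter_or, Finset.card_union_of_disjoint hdisj1]
    have step2 : (Finset.univ.filter fun i : Fin L => Mset i = M ∨ Mset i = Mᶜ)
        = (Finset.univ.filter fun i : Fin L =>
            (∀ j, a (ks j) i = β j) ∨ (∀ j, a (ks j) i = !(β j))) := by
      apply Finset.filter_congr
      intro i _
      rw [hiff2 i M, hiff2 i Mᶜ]
      cases hg : g i
      · simp only [Finset.mem_compl, decide_not, hβ]
        constructor
        · rintro (h | h)
          · right; intro j; rw [h j]; simp
          · left; intro j; rw [h j]; simp
        · rintro (h | h)
          · right; intro j; rw [h j]; simp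
          · left; intro j; rw [h j]; simp
      · simp only [Finset.mem_compl, decide_not, hβ]
        constructor
        · rintro (h | h)
          · left; intro j; rw [h j]; simp
          · right; intro j; rw [h j]; simp
        · rintro (h | h)
          · left; intro j; rw [h j]; simp
          · right; intro j; rw [h j]; simp
    have step3 : (Finset.univ.filter fun i : Fin L =>
            (∀ j, a (ks j) i = β j) ∨ (∀ j, a (ks j) i = !(β j))).card
        = (Finset.univ.filter fun i : Fin L => ∀ j, a (ks j) i = β j).card
          + (Finset.univ.filter fun i : Fin L => ∀ j, a (ks j) i = !(β j)).card := by
      rw [Finset.filter_or, Finset.card_union_of_disjoint hdisj2]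
    have hqa := hQ β
    have hqb := hQ (fun j => !(β j))
    rw [step1, step2, step3, hqa, hqb]
    ring
  -- per-threshold count bound
  have hcount : ∀ u : ℕ, (Finset.univ.filter fun i : Fin L => s - u ≤ c i).card
      ≤ (∑ j ∈ range (u+1), s.choose j) * (2*q) := by
    intro u
    have hfib := Finset.card_eq_sum_card_fiberwise (f := Mset)
      (s := Finset.univ.filter fun i : Fin L => s - u ≤ c i)
      (t := (Finset.univ : Finset (Finset (Fin s))).filter fun M => s - u ≤ M.card)
      (by intro i hi
          simp only [Finset.mem_coe, Finset.mem_filter, Finset.mem_univ, true_and] at *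
          exact hi)
    rw [hfib, ← stmt0_aux_L5 s u]
    have := Finset.sum_le_card_nsmul
      ((Finset.univ : Finset (Finset (Fin s))).filter fun M => s - u ≤ M.card)
      (fun M => ((Finset.univ.filter fun i : Fin L => s - u ≤ c i).filter
        fun i => Mset i = M).card) (2*q) ?_
    · simpa [smul_eq_mul] using this
    · intro M hM
      calc ((Finset.univ.filter fun i : Fin L => s - u ≤ c i).filter fun i => Mset i = M).card
          ≤ (Finset.univ.filter fun i : Fin L => Mset i = M).card := by
            apply Finset.card_le_card
            intro i hi
            simp only [Finset.mem_filter, Finset.mem_univ, true_and] at *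
            exact hi.2
        _ ≤ 2*q := by have := NM M; omega
  -- w rewriting
  have hw : ∀ i : Fin L, (t+1) - (s - c i)
      = ((range (t+1)).filter fun u => s - u ≤ c i).card := by
    intro i
    have h1 : (range (t+1)).filter (fun u => s - u ≤ c i) = Finset.Ico (s - c i) (t+1) := by
      ext u
      simp only [Finset.mem_filter, Finset.mem_range, Finset.mem_Ico]
      omega
    rw [h1, Nat.card_Ico]
  -- sum bound over T
  have hsumw : ∑ i ∈ T, ((t+1) - (s - c i))
      ≤ ∑ u ∈ range (t+1), (∑ j ∈ range (u+1), s.choose j) * (2*q) := by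
    calc ∑ i ∈ T, ((t+1) - (s - c i))
        ≤ ∑ i ∈ Finset.univ, ((t+1) - (s - c i)) :=
          Finset.sum_le_sum_of_subset (Finset.subset_univ T)
      _ = ∑ i ∈ Finset.univ, ((range (t+1)).filter fun u => s - u ≤ c i).card :=
          Finset.sum_congr rfl (fun i _ => hw i)
      _ = ∑ u ∈ range (t+1), (Finset.univ.filter fun i : Fin L => s - u ≤ c i).card := by
          simp only [Finset.card_filter]
          rw [Finset.sum_comm]
      _ ≤ _ := Finset.sum_le_sum (fun u _ => hcount u)
  have hTbound : ∑ i ∈ T, c i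
      ≤ (s - t - 1) * n + ∑ u ∈ range (t+1), (∑ j ∈ range (u+1), s.choose j) * (2*q) := by
    calc ∑ i ∈ T, c i ≤ ∑ i ∈ T, ((s - t - 1) + ((t+1) - (s - c i))) := by
          apply Finset.sum_le_sum
          intro i _
          have := hcs i
          omega
      _ = (s - t - 1) * T.card + ∑ i ∈ T, ((t+1) - (s - c i)) := by
          rw [Finset.sum_add_distrib, Finset.sum_const, smul_eq_mul, mul_comm]
      _ ≤ _ := by rw [hT]; exact Nat.add_le_add_left hsumw _
  -- counts sum
  have hswap : ∑ j : Fin s, (T.filter fun i => g i = a (ks j) i).card = ∑ i ∈ T, c i := by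
    simp only [hc, hMset, Finset.card_filter]
    rw [Finset.sum_comm]
  -- real identity
  have hID := stmt0_aux_L3 s t (by omega)
  have hsreal : ((s:ℝ) - r - 1) = ((s - t - 1 : ℕ) : ℝ) := by
    rw [hrt, show s - t - 1 = s - (t+1) from (Nat.sub_sub s t 1), Nat.cast_sub (by omega : t + 1 ≤ s)]
    push_cast
    ring
  -- real identity
  have hLreal : (L:ℝ) = (q:ℝ) * 2^s := by rw [hq]; push_cast; ring
  have hIDR : ((∑ u ∈ range (t+1), ∑ j ∈ range (u+1), s.choose j : ℕ) : ℝ)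
      + ((s - t - 1 : ℕ) : ℝ) * ((∑ j ∈ range (t+1), s.choose j : ℕ) : ℝ)
      = (s:ℝ) * ((∑ j ∈ range (t+1), (s-1).choose j : ℕ) : ℝ) := by
    exact_mod_cast hID
  have h2s : (2:ℝ)^s = 2^(s-1) * 2 := by
    rw [← pow_succ]
    congr 1
    omega
  have hncs : ((((s-t-1) * n
        + ∑ u ∈ range (t+1), (∑ j ∈ range (u+1), s.choose j) * (2*q) : ℕ)) : ℝ)
      = (s:ℝ) * nc := by
    have hsum : (∑ u ∈ range (t+1), (∑ j ∈ range (u+1), s.choose j) * (2*q))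
        = (∑ u ∈ range (t+1), ∑ j ∈ range (u+1), s.choose j) * (2*q) := by
      rw [Finset.sum_mul]
    rw [hsum, hnc, hKt, hKt', hsreal]
    push_cast
    rw [hn, hLreal]
    have hs0 : (s:ℝ) ≠ 0 := by positivity
    have hp0 : (2:ℝ)^(s-1) ≠ 0 := by positivity
    rw [h2s]
    field_simp
    push_cast at hIDR
    linear_combination (q:ℝ) * hIDR
  -- final contradiction
  haveI : Nonempty (Fin s) := ⟨⟨0, by omega⟩⟩
  have hfin : (s:ℝ) * nc < (s:ℝ) * nc := by
    calc (s:ℝ)*nc = ∑ _j : Fin s, nc := by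
          rw [Finset.sum_const, Finset.card_univ, Fintype.card_fin, nsmul_eq_mul]
      _ < ∑ j : Fin s, ((T.filter fun i => g i = a (ks j) i).card : ℝ) :=
          Finset.sum_lt_sum_of_nonempty Finset.univ_nonempty (fun j _ => hcon j)
      _ = ((∑ j : Fin s, (T.filter fun i => g i = a (ks j) i).card : ℕ) : ℝ) := by
          push_cast
          rfl
      _ = ((∑ i ∈ T, c i : ℕ) : ℝ) := by rw [hswap]
      _ ≤ ((((s-t-1) * n
            + ∑ u ∈ range (t+1), (∑ j ∈ range (u+1), s.choose j) * (2*q) : ℕ)) : ℝ) := by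
          exact_mod_cast hTbound
      _ = (s:ℝ) * nc := hncs
  exact lt_irrefl _ hfin

theorem stmt0 {K : Type*} [Fintype K] (L S : ℕ) (hL : 0 < L) (hS : 0 < S)
    (hdvd : 2 ^ S ∣ L) (hK : S ≤ Fintype.card K)
    (a : K → Fin L → Bool)
    (hpatt : ∀ s : ℕ, 2 ≤ s → s ≤ S → ∀ ks : Fin s → K, Function.Injective ks →
      ∀ b : Fin s → Bool,
        (Finset.univ.filter (fun i : Fin L => ∀ j, a (ks j) i = b j)).card = L / 2 ^ s)
    (s : ℕ) (hs2 : 2 ≤ s) (hsS : s ≤ S)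
    (γ : ℝ) (hγ0 : 0 < γ) (hγ1 : γ ≤ 1)
    (n : ℕ) (hn : (n : ℝ) = γ * L)
    (T : Finset (Fin L)) (hT : T.card = n)
    (g : Fin L → Bool)
    (r : ℤ) (hr : -1 ≤ r)
    (hr1 : binomCDF s r ≤ γ / 2) (hr2 : γ / 2 < binomCDF s (r + 1)) :
    Nat.card {k : K //
        ((T.filter (fun i => g i = a k i)).card : ℝ) >
          L * (binomCDF (s - 1) r + ((s : ℝ) - r - 1) / s * (γ - 2 * binomCDF s r))}
      ≤ s - 1 ∧
    (Nat.card {k : K //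
        ((T.filter (fun i => g i = a k i)).card : ℝ) ≤
          L * (binomCDF (s - 1) r + ((s : ℝ) - r - 1) / s * (γ - 2 * binomCDF s r))} : ℝ)
        / Fintype.card K ≥ 1 - s / Fintype.card K := by
  classical
  set nc : ℝ := L * (binomCDF (s - 1) r + ((s : ℝ) - r - 1) / s * (γ - 2 * binomCDF s r))
    with hnc
  have hmain : (Finset.univ.filter
      (fun k : K => ((T.filter (fun i => g i = a k i)).card : ℝ) > nc)).card ≤ s - 1 := by
    by_contra hx
    push_neg at hx
    have hsx : s ≤ (Finset.univ.filter
        (fun k : K => ((T.filter (fun i => g i = a k i)).card : ℝ) > nc)).card := by omega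
    obtain ⟨t', ht'sub, ht'card⟩ := Finset.exists_subset_card_eq hsx
    let e := t'.equivFin
    let ks : Fin s → K := fun j => (e.symm (Fin.cast ht'card.symm j) : K)
    have hinj : Function.Injective ks := by
      intro j1 j2 hj
      have h1 := e.symm.injective (Subtype.coe_injective hj)
      exact Fin.ext (by simpa using congrArg Fin.val h1)
    obtain ⟨j, hj⟩ := stmt0_aux_Lmain L S hL hS hdvd hK a hpatt s hs2 hsS γ hγ0 hγ1 n hn T hT g r hr
      hr1 hr2 ks hinj
    have hmem : ks j ∈ Finset.univ.filter
        (fun k : K => ((T.filter (fun i => g i = a k i)).card : ℝ) > nc) :=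
      ht'sub (e.symm (Fin.cast ht'card.symm j)).2
    simp only [Finset.mem_filter, Finset.mem_univ, true_and] at hmem
    rw [← hnc] at hj
    exact absurd hj (not_le.2 hmem)
  constructor
  · rw [Nat.card_eq_fintype_card, Fintype.card_subtype]
    exact hmain
  · have hAB : (Finset.univ.filter
        (fun k : K => ((T.filter (fun i => g i = a k i)).card : ℝ) ≤ nc)).card
      + (Finset.univ.filter
        (fun k : K => ((T.filter (fun i => g i = a k i)).card : ℝ) > nc)).card
      = Fintype.card K := by
      rw [← Finset.card_univ (α := K)]
      have h1 := Finset.card_filter_add_card_filter_not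
        (s := (Finset.univ : Finset K))
        (p := fun k : K => ((T.filter (fun i => g i = a k i)).card : ℝ) ≤ nc)
      rw [← h1]
      congr 2
      apply Finset.filter_congr
      intro k _
      simp [not_le]
    rw [Nat.card_eq_fintype_card, Fintype.card_subtype]
    have hKpos : 0 < Fintype.card K := by omega
    have heq : (1:ℝ) - s / Fintype.card K = ((Fintype.card K : ℝ) - s) / Fintype.card K := by
      field_simp
    rw [ge_iff_le, heq]
    rw [div_le_div_iff_of_pos_right (show (0:ℝ) < Fintype.card K by exact_mod_cast hKpos)]
    have h2 : ((Finset.univ.filter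
        (fun k : K => ((T.filter (fun i => g i = a k i)).card : ℝ) > nc)).card : ℝ) ≤ s := by
      exact_mod_cast le_trans hmain (Nat.sub_le s 1)
    have h3 : ((Finset.univ.filter
        (fun k : K => ((T.filter (fun i => g i = a k i)).card : ℝ) ≤ nc)).card : ℝ)
        + ((Finset.univ.filter
        (fun k : K => ((T.filter (fun i => g i = a k i)).card : ℝ) > nc)).card : ℝ)
        = Fintype.card K := by
      exact_mod_cast hAB
    linarith
end

section
/- Let s ≥ 2 be an integer and γ a real number with 0 < γ ≤ 1. Let ν = (ν₀, …, ν_s) ∈ ℝ^{s+1} satisfy 0 ≤ ν_t ≤ 2^{−s} for all t and ∑_{t=0}^{s} C(s,t)·ν_t = γ. Then the objective value F(ν) = ∑_{t=0}^{⌊s/2⌋} C(s−1,t)·ν_t + ∑_{t=⌊s/2⌋+1}^{s} C(s−1,t−1)·ν_t satisfies F(ν) ≤ P_{s−1}(r) + ((s−r−1)/s)·(γ − 2·P_s(r)), where r is the unique integer ≥ −1 with P_s(r) ≤ γ/2 < P_s(r+1). -/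
open Finset

lemma aux_id1 (s t : ℕ) (hs : 1 ≤ s) (ht : t ≤ s) :
    (s - t) * s.choose t = s * (s - 1).choose t := by
  rcases eq_or_lt_of_le ht with h | h
  · subst h
    have h0 : (t - 1).choose t = 0 := Nat.choose_eq_zero_of_lt (by omega)
    simp [h0]
  · have h1 : t ≤ s - 1 := by omega
    have key := Nat.add_one_mul_choose_eq (s - 1) (s - t - 1)
    have hs1 : (s - 1) + 1 = s := by omega
    have h2 : s - t - 1 + 1 = s - t := by omega
    have h3 : (s - 1).choose (s - t - 1) = (s - 1).choose t := by
      have e : s - t - 1 = (s - 1) - t := by omega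
      rw [e, Nat.choose_symm h1]
    have h4 : s.choose (s - t) = s.choose t := Nat.choose_symm ht
    simp only [Nat.succ_eq_add_one, hs1, h2, h3, h4] at key
    rw [key]; ring

lemma aux_id2 (s t : ℕ) (h1 : 1 ≤ t) (h2 : t ≤ s) :
    t * s.choose t = s * (s - 1).choose (t - 1) := by
  have key := Nat.add_one_mul_choose_eq (s - 1) (t - 1)
  have hs1 : (s - 1) + 1 = s := by omega
  have h3 : t - 1 + 1 = t := by omega
  simp only [Nat.succ_eq_add_one, hs1, h3] at key
  rw [key]; ring

lemma aux_refl (s n : ℕ) (hn : n < s) :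
    ∑ j ∈ Finset.Ico (n + 1) (s + 1), s.choose j = ∑ j ∈ Finset.range (s - n), s.choose j := by
  rw [Finset.sum_Ico_eq_sum_range]
  have hlen : s + 1 - (n + 1) = s - n := by omega
  rw [hlen]
  rw [← Finset.sum_range_reflect (fun j => s.choose (n + 1 + j)) (s - n)]
  apply Finset.sum_congr rfl
  intro j hj
  rw [Finset.mem_range] at hj
  have e1 : n + 1 + (s - n - 1 - j) = s - j := by omega
  rw [e1, Nat.choose_symm (by omega)]

lemma aux_half (s n : ℕ) (h : 2 * ∑ j ∈ Finset.range (n + 1), s.choose j ≤ 2 ^ s) :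
    2 * n < s := by
  by_contra hc
  push_neg at hc
  have hpow : ∑ j ∈ Finset.range (s + 1), s.choose j = 2 ^ s := Nat.sum_range_choose s
  have hp : 0 < 2 ^ s := Nat.pow_pos (by norm_num)
  rcases lt_or_ge n s with hn | hn
  · have hsplit : ∑ j ∈ Finset.range (n+1), s.choose j + ∑ j ∈ Finset.Ico (n+1) (s+1), s.choose j
        = ∑ j ∈ Finset.range (s+1), s.choose j := by
      simp only [Finset.range_eq_Ico]
      exact Finset.sum_Ico_consecutive _ (by omega) (by omega)
    have h2 := aux_refl s n hn
    have h3 : ∑ j ∈ Finset.range (s - n), s.choose j ≤ ∑ j ∈ Finset.range n, s.choose j :=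
      Finset.sum_le_sum_of_subset (Finset.range_subset_range.mpr (by omega))
    have h4 : ∑ j ∈ Finset.range (n+1), s.choose j = ∑ j ∈ Finset.range n, s.choose j + s.choose n :=
      Finset.sum_range_succ _ n
    have h5 : 0 < s.choose n := Nat.choose_pos (by omega)
    omega
  · have hsub : ∑ j ∈ Finset.range (s+1), s.choose j ≤ ∑ j ∈ Finset.range (n+1), s.choose j :=
      Finset.sum_le_sum_of_subset (Finset.range_subset_range.mpr (by omega))
    omega

lemma split_sum (s : ℕ) (f : ℕ → ℝ) :
    ∑ t ∈ Finset.range (s / 2 + 1), f t + ∑ t ∈ Finset.Icc (s / 2 + 1) s, f t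
      = ∑ t ∈ Finset.range (s + 1), f t := by
  simp only [Finset.range_eq_Ico]
  rw [← Finset.Ico_add_one_right_eq_Icc]
  exact Finset.sum_Ico_consecutive f (by omega) (by omega)

noncomputable def Wfun (s t : ℕ) : ℝ := (((s - min t (s - t)) * s.choose t : ℕ) : ℝ)
noncomputable def Dfun (s n t : ℕ) : ℝ := Wfun s t - ((s:ℝ) - n - 1) * (s.choose t : ℝ)

lemma Wfun_left (s t : ℕ) (hs : 1 ≤ s) (h : 2 * t ≤ s) :
    Wfun s t = (s : ℝ) * ((s - 1).choose t : ℝ) := by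
  unfold Wfun
  rw [min_eq_left (by omega : t ≤ s - t), aux_id1 s t hs (by omega)]
  push_cast; ring

lemma Wfun_right (s t : ℕ) (h1 : s + 1 ≤ 2 * t) (h2 : t ≤ s) :
    Wfun s t = (s : ℝ) * ((s - 1).choose (t - 1) : ℝ) := by
  unfold Wfun
  rw [min_eq_right (by omega : s - t ≤ t)]
  have e : s - (s - t) = t := by omega
  rw [e, aux_id2 s t (by omega) h2]
  push_cast; ring

lemma Dfun_symm (s n i : ℕ) (hi : i ≤ s) : Dfun s n (s - i) = Dfun s n i := by
  unfold Dfun Wfun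
  have e2 : s - (s - i) = i := by omega
  have e3 : s.choose (s - i) = s.choose i := Nat.choose_symm hi
  rw [e2, e3, min_comm (s - i) i]

lemma Dfun_nonneg (s n t : ℕ) (hns : n + 1 ≤ s) (hmin : min t (s - t) ≤ n) :
    0 ≤ Dfun s n t := by
  unfold Dfun Wfun
  push_cast [Nat.cast_mul]
  have h1 : ((s:ℝ) - n - 1) ≤ ((s - min t (s - t) : ℕ) : ℝ) := by
    have ha : ((s - n : ℕ) : ℝ) ≤ ((s - min t (s - t) : ℕ) : ℝ) := by
      exact_mod_cast Nat.sub_le_sub_left hmin s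
    rw [Nat.cast_sub (by omega : n ≤ s)] at ha
    linarith
  have h2 := mul_le_mul_of_nonneg_right h1 (Nat.cast_nonneg (s.choose t))
  linarith

lemma Dfun_nonpos (s n t : ℕ) (hns : n + 1 ≤ s) (hmin : n + 1 ≤ min t (s - t)) :
    Dfun s n t ≤ 0 := by
  unfold Dfun Wfun
  push_cast [Nat.cast_mul]
  have h1 : ((s - min t (s - t) : ℕ) : ℝ) ≤ ((s:ℝ) - n - 1) := by
    have ha : ((s - min t (s - t) : ℕ) : ℝ) ≤ ((s - (n+1) : ℕ) : ℝ) := by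
      exact_mod_cast Nat.sub_le_sub_left hmin s
    rw [Nat.cast_sub (by omega : n + 1 ≤ s)] at ha
    push_cast at ha
    linarith
  have h2 := mul_le_mul_of_nonneg_right h1 (Nat.cast_nonneg (s.choose t))
  linarith

theorem stmt1 (s : ℕ) (hs : 2 ≤ s) (γ : ℝ) (hγ0 : 0 < γ) (hγ1 : γ ≤ 1)
    (ν : ℕ → ℝ)
    (hν0 : ∀ t ≤ s, 0 ≤ ν t) (hν1 : ∀ t ≤ s, ν t ≤ 1 / 2 ^ s)
    (hsum : ∑ t ∈ Finset.range (s + 1), (s.choose t : ℝ) * ν t = γ)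
    (r : ℤ) (hr : -1 ≤ r)
    (hr1 : binomCDF s r ≤ γ / 2) (hr2 : γ / 2 < binomCDF s (r + 1)) :
    ∑ t ∈ Finset.range (s / 2 + 1), ((s - 1).choose t : ℝ) * ν t +
      ∑ t ∈ Finset.Icc (s / 2 + 1) s, ((s - 1).choose (t - 1) : ℝ) * ν t ≤
    binomCDF (s - 1) r + ((s : ℝ) - r - 1) / s * (γ - 2 * binomCDF s r) := by
  have hs0 : (0:ℝ) < s := by exact_mod_cast (by omega : 0 < s)
  have hsne : (s:ℝ) ≠ 0 := ne_of_gt hs0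
  rcases lt_or_ge r 0 with hneg | hpos
  · -- case r = -1
    have hr' : r = -1 := by omega
    subst hr'
    have e1 : binomCDF (s-1) (-1) = 0 := by simp [binomCDF]
    have e2 : binomCDF s (-1) = 0 := by simp [binomCDF]
    have hle : ∑ t ∈ Finset.range (s / 2 + 1), ((s - 1).choose t : ℝ) * ν t +
        ∑ t ∈ Finset.Icc (s / 2 + 1) s, ((s - 1).choose (t - 1) : ℝ) * ν t ≤ γ := by
      rw [← hsum, ← split_sum s (fun t => (s.choose t : ℝ) * ν t)]
      apply add_le_add
      · apply Finset.sum_le_sum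
        intro t ht
        rw [Finset.mem_range] at ht
        have hc : ((s-1).choose t : ℝ) ≤ (s.choose t : ℝ) := by
          exact_mod_cast Nat.choose_le_choose t (by omega : s - 1 ≤ s)
        exact mul_le_mul_of_nonneg_right hc (hν0 t (by omega))
      · apply Finset.sum_le_sum
        intro t ht
        rw [Finset.mem_Icc] at ht
        have hcle : (s-1).choose (t-1) ≤ s.choose t := by
          obtain ⟨s', rfl⟩ : ∃ s', s = s' + 1 := ⟨s - 1, by omega⟩
          obtain ⟨t', rfl⟩ : ∃ t', t = t' + 1 := ⟨t - 1, by omega⟩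
          simp [Nat.choose_succ_succ]
        have hc : ((s-1).choose (t-1) : ℝ) ≤ (s.choose t : ℝ) := by exact_mod_cast hcle
        exact mul_le_mul_of_nonneg_right hc (hν0 t ht.2)
    rw [e1, e2]
    push_cast
    have heq : (0:ℝ) + ((s:ℝ) - -1 - 1) / (s:ℝ) * (γ - 2 * 0) = γ := by
      field_simp
      ring
    linarith [hle]
  · -- case r = n ≥ 0
    obtain ⟨n, rfl⟩ : ∃ n : ℕ, r = (n : ℤ) := ⟨r.toNat, (Int.toNat_of_nonneg hpos).symm⟩
    have hB0 : binomCDF s (n : ℤ) = (∑ j ∈ Finset.range (n+1), (s.choose j : ℝ)) / 2 ^ s := by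
      simp [binomCDF]
    have hB1 : binomCDF (s-1) (n : ℤ)
        = (∑ j ∈ Finset.range (n+1), ((s-1).choose j : ℝ)) / 2 ^ (s-1) := by
      simp [binomCDF]
    have hp2 : (0:ℝ) < 2 ^ s := by positivity
    have hsum_le : 2 * ∑ j ∈ Finset.range (n+1), s.choose j ≤ 2 ^ s := by
      have h1 : (∑ j ∈ Finset.range (n+1), (s.choose j : ℝ)) ≤ 1/2 * 2 ^ s := by
        rw [hB0] at hr1
        rw [div_le_iff₀ hp2] at hr1
        nlinarith [mul_nonneg (by linarith : (0:ℝ) ≤ 1 - γ) (le_of_lt hp2)]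
      have h2 : ((2 * ∑ j ∈ Finset.range (n+1), s.choose j : ℕ) : ℝ) ≤ ((2^s : ℕ) : ℝ) := by
        push_cast
        linarith
      exact_mod_cast h2
    have h2n : 2 * n < s := aux_half s n hsum_le
    have hns : n + 1 ≤ s := by omega
    have hOBJ : (s:ℝ) * (∑ t ∈ Finset.range (s / 2 + 1), ((s - 1).choose t : ℝ) * ν t +
        ∑ t ∈ Finset.Icc (s / 2 + 1) s, ((s - 1).choose (t - 1) : ℝ) * ν t)
        = ∑ t ∈ Finset.range (s+1), Wfun s t * ν t := by
      rw [← split_sum s (fun t => Wfun s t * ν t)]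
      rw [mul_add, Finset.mul_sum, Finset.mul_sum]
      congr 1
      · apply Finset.sum_congr rfl
        intro t ht
        rw [Finset.mem_range] at ht
        rw [Wfun_left s t (by omega) (by omega)]
        ring
      · apply Finset.sum_congr rfl
        intro t ht
        rw [Finset.mem_Icc] at ht
        rw [Wfun_right s t (by omega) (by omega)]
        ring
    have hB : ∑ t ∈ Finset.range (s+1), Wfun s t * ν t
        = ((s:ℝ) - n - 1) * γ + ∑ t ∈ Finset.range (s+1), Dfun s n t * ν t := by
      rw [← hsum, Finset.mul_sum, ← Finset.sum_add_distrib]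
      apply Finset.sum_congr rfl
      intro t _
      unfold Dfun
      ring
    have hsplit3 : ∑ t ∈ Finset.range (s+1), Dfun s n t * ν t
        = ∑ t ∈ Finset.range (n+1), Dfun s n t * ν t
          + ∑ t ∈ Finset.Ico (n+1) (s-n), Dfun s n t * ν t
          + ∑ t ∈ Finset.Icc (s-n) s, Dfun s n t * ν t := by
      simp only [Finset.range_eq_Ico]
      rw [← Finset.Ico_add_one_right_eq_Icc]
      rw [Finset.sum_Ico_consecutive _ (by omega : 0 ≤ n+1) (by omega : n+1 ≤ s-n)]
      rw [Finset.sum_Ico_consecutive _ (by omega : 0 ≤ s-n) (by omega : s-n ≤ s+1)]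
    have hmid : ∑ t ∈ Finset.Ico (n+1) (s-n), Dfun s n t * ν t ≤ 0 := by
      apply Finset.sum_nonpos
      intro t ht
      rw [Finset.mem_Ico] at ht
      have hd : Dfun s n t ≤ 0 :=
        Dfun_nonpos s n t hns (le_min (by omega) (by omega))
      exact mul_nonpos_of_nonpos_of_nonneg hd (hν0 t (by omega))
    have hfirst : ∑ t ∈ Finset.range (n+1), Dfun s n t * ν t
        ≤ ∑ t ∈ Finset.range (n+1), Dfun s n t * (1 / 2^s) := by
      apply Finset.sum_le_sum
      intro t ht
      rw [Finset.mem_range] at ht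
      have hd : 0 ≤ Dfun s n t :=
        Dfun_nonneg s n t hns (le_trans (min_le_left _ _) (by omega))
      exact mul_le_mul_of_nonneg_left (hν1 t (by omega)) hd
    have hlast : ∑ t ∈ Finset.Icc (s-n) s, Dfun s n t * ν t
        ≤ ∑ t ∈ Finset.Icc (s-n) s, Dfun s n t * (1 / 2^s) := by
      apply Finset.sum_le_sum
      intro t ht
      rw [Finset.mem_Icc] at ht
      have hd : 0 ≤ Dfun s n t :=
        Dfun_nonneg s n t hns (le_trans (min_le_right _ _) (by omega))
      exact mul_le_mul_of_nonneg_left (hν1 t ht.2) hd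
    have hsym : ∑ t ∈ Finset.Icc (s-n) s, Dfun s n t * (1/2^s)
        = ∑ t ∈ Finset.range (n+1), Dfun s n t * (1/2^s) := by
      rw [← Finset.Ico_add_one_right_eq_Icc, Finset.sum_Ico_eq_sum_range]
      have e : s + 1 - (s - n) = n + 1 := by omega
      rw [e]
      rw [← Finset.sum_range_reflect (fun i => Dfun s n (s - n + i) * (1/2^s)) (n+1)]
      apply Finset.sum_congr rfl
      intro i hi
      rw [Finset.mem_range] at hi
      have e1 : s - n + (n + 1 - 1 - i) = s - i := by omega
      rw [e1, Dfun_symm s n i (by omega)]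
    have hE : (s:ℝ) * (binomCDF (s-1) (n:ℤ) + ((s:ℝ) - (n:ℝ) - 1) / (s:ℝ) * (γ - 2 * binomCDF s (n:ℤ)))
        = ((s:ℝ) - n - 1) * γ + 2 * ∑ t ∈ Finset.range (n+1), Dfun s n t * (1/2^s) := by
      rw [hB0, hB1]
      have hW : ∑ t ∈ Finset.range (n+1), Wfun s t
          = (s:ℝ) * ∑ j ∈ Finset.range (n+1), ((s-1).choose j : ℝ) := by
        rw [Finset.mul_sum]
        apply Finset.sum_congr rfl
        intro t ht
        rw [Finset.mem_range] at ht
        exact Wfun_left s t (by omega) (by omega)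
      have hDsum : ∑ t ∈ Finset.range (n+1), Dfun s n t
          = (s:ℝ) * (∑ j ∈ Finset.range (n+1), ((s-1).choose j : ℝ))
            - ((s:ℝ) - n - 1) * ∑ j ∈ Finset.range (n+1), (s.choose j : ℝ) := by
        unfold Dfun
        rw [Finset.sum_sub_distrib, hW, ← Finset.mul_sum]
      rw [← Finset.sum_mul, hDsum]
      have hpow : (2:ℝ) ^ (s-1) = 2 ^ s / 2 := by
        rw [eq_div_iff (by norm_num : (2:ℝ) ≠ 0), ← pow_succ]
        congr 1
        omega
      rw [hpow]
      have h2sne : (2:ℝ) ^ s ≠ 0 := ne_of_gt hp2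
      field_simp
      ring
    refine le_of_mul_le_mul_left ?_ hs0
    push_cast
    rw [hOBJ, hE, hB, hsplit3]
    linarith [hmid, hfirst, hlast, hsym]
end

section
/- Let L be a positive integer, 𝒦 a finite set of keys, s an integer with 2 ≤ s ≤ |𝒦|, W ≥ 0 a real number, and a : 𝒦 → Fin L → {0,1} a family of binary sequences such that for all distinct keys k₁,…,k_s ∈ 𝒦 and all bits b₁,…,b_s ∈ {0,1}, the pattern count #{i ∈ Fin L : a(k₁)(i)=b₁, …, a(k_s)(i)=b_s} is at most L/2^s + W. Set L′ = L·(1 + 2^s·W/L) = L + 2^s·W and, for a real γ with 0 < γ ≤ 1 such that n = γL is an integer, set γ′ = γ·L/L′. Let T ⊆ Fin L with |T| = n and let g : Fin L → {0,1} be an arbitrary guessing function. Let r be the unique integer ≥ −1 with P_s(r) ≤ γ′/2 < P_s(r+1) and set n_correct = L′·[P_{s−1}(r) + ((s−r−1)/s)·(γ′ − 2·P_s(r))]. Then the number of keys k ∈ 𝒦 with #{i ∈ T : g(i) = a(k)(i)} > n_correct is at most s − 1; equivalently, a uniformly random key k satisfies #{i ∈ T : g(i) = a(k)(i)} ≤ n_correct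 with probability at least 1 − s/|𝒦|. -/
open Finset

lemma choose_id {s : ℕ} (hs : 1 ≤ s) (j : ℕ) :
    (s - j) * s.choose j = s * (s - 1).choose j := by
  rcases lt_or_ge j s with h | h
  · have h1 : s - 1 + 1 = s := Nat.succ_pred_eq_of_pos hs
    have := Nat.add_one_mul_choose_eq (s - 1) j
    simp only [Nat.succ_eq_add_one, h1] at this
    rw [this, Nat.choose_succ_right_eq, Nat.mul_comm]
  · rcases eq_or_lt_of_le h with h | h
    · subst h
      simp [Nat.choose_eq_zero_of_lt (show s - 1 < s by omega)]
    · have : (s-1).choose j = 0 := Nat.choose_eq_zero_of_lt (by omega)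
      simp [Nat.choose_eq_zero_of_lt h, this]

lemma key_nat {s rn : ℕ} (h : rn + 1 ≤ s) :
    ∑ j ∈ range (s + 1), (j - (s - 1 - rn)) * s.choose j
      + (s - 1 - rn) * ∑ j ∈ range (rn + 1), s.choose j
      = s * ∑ j ∈ range (rn + 1), (s - 1).choose j := by
  have hs1 : 1 ≤ s := by omega
  have h1 : ∑ j ∈ range (s + 1), (j - (s - 1 - rn)) * s.choose j
      = ∑ j ∈ range (rn + 1), (rn + 1 - j) * s.choose j := by
    rw [← Finset.sum_range_reflect (fun j => (j - (s - 1 - rn)) * s.choose j) (s+1)]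
    rw [← Finset.sum_range_add_sum_Ico _ (show rn + 1 ≤ s + 1 by omega)]
    have hz : ∑ j ∈ Finset.Ico (rn+1) (s+1),
        (s + 1 - 1 - j - (s - 1 - rn)) * s.choose (s + 1 - 1 - j) = 0 := by
      apply Finset.sum_eq_zero
      intro j hj
      rw [Finset.mem_Ico] at hj
      have : s + 1 - 1 - j - (s - 1 - rn) = 0 := by omega
      rw [this, Nat.zero_mul]
    rw [hz, Nat.add_zero]
    apply Finset.sum_congr rfl
    intro j hj
    rw [Finset.mem_range] at hj
    have e1 : s + 1 - 1 - j - (s - 1 - rn) = rn + 1 - j := by omega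
    have e2 : s.choose (s + 1 - 1 - j) = s.choose j := by
      rw [show s + 1 - 1 - j = s - j by omega, Nat.choose_symm (by omega)]
    rw [e1, e2]
  rw [h1, Finset.mul_sum, Finset.mul_sum, ← Finset.sum_add_distrib]
  apply Finset.sum_congr rfl
  intro j hj
  rw [Finset.mem_range] at hj
  rw [← Nat.add_mul, show rn + 1 - j + (s - 1 - rn) = s - j by omega]
  exact choose_id hs1 j

lemma alg1 (c p A A' lam s n : ℝ) (hp : p ≠ 0) (hs : s ≠ 0) (hc : c ≠ 0) :
    s * (c * p * (A' / p + lam / s * (n / (c * p) - 2 * (A / (2 * p)))))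
      = s * c * A' + lam * n - lam * (c * A) := by
  field_simp
  ring

theorem stmt2 {K : Type*} [Fintype K] (L : ℕ) (hL : 0 < L)
    (s : ℕ) (hs2 : 2 ≤ s) (hsK : s ≤ Fintype.card K)
    (W : ℝ) (hW : 0 ≤ W)
    (a : K → Fin L → Bool)
    (hpatt : ∀ ks : Fin s → K, Function.Injective ks → ∀ b : Fin s → Bool,
      ((Finset.univ.filter (fun i : Fin L => ∀ j, a (ks j) i = b j)).card : ℝ) ≤
        L / 2 ^ s + W)
    (γ : ℝ) (hγ0 : 0 < γ) (hγ1 : γ ≤ 1)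
    (n : ℕ) (hn : (n : ℝ) = γ * L)
    (T : Finset (Fin L)) (hT : T.card = n)
    (g : Fin L → Bool)
    (L' γ' : ℝ) (hL' : L' = L + 2 ^ s * W) (hγ' : γ' = γ * L / L')
    (r : ℤ) (hr : -1 ≤ r)
    (hr1 : binomCDF s r ≤ γ' / 2) (hr2 : γ' / 2 < binomCDF s (r + 1)) :
    Nat.card {k : K //
        ((T.filter (fun i => g i = a k i)).card : ℝ) >
          L' * (binomCDF (s - 1) r + ((s : ℝ) - r - 1) / s * (γ' - 2 * binomCDF s r))}
      ≤ s - 1 ∧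
    (Nat.card {k : K //
        ((T.filter (fun i => g i = a k i)).card : ℝ) ≤
          L' * (binomCDF (s - 1) r + ((s : ℝ) - r - 1) / s * (γ' - 2 * binomCDF s r))} : ℝ)
        / Fintype.card K ≥ 1 - s / Fintype.card K := by
  classical
  set nc : ℝ := L' * (binomCDF (s - 1) r + ((s : ℝ) - r - 1) / s * (γ' - 2 * binomCDF s r))
    with hnc
  clear_value nc
  have hLpos : (0:ℝ) < L := by exact_mod_cast hL
  have h2s : (0:ℝ) < 2 ^ s := by positivity
  have hL'pos : (0:ℝ) < L' := by
    rw [hL']; positivity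
  have hspos : (0:ℝ) < s := by exact_mod_cast (by omega : 0 < s)
  have hγ'L' : γ' * L' = n := by
    rw [hγ', hn]; field_simp
  have hγ'1 : γ' ≤ 1 := by
    rw [hγ']
    apply div_le_one_of_le₀ _ hL'pos.le
    nlinarith [pow_pos (show (0:ℝ) < 2 by norm_num) s]
  have hγ'0 : 0 < γ' := by
    rw [hγ']; positivity
  -- c
  set c : ℝ := 2 * ((L:ℝ) / 2 ^ s + W) with hc
  clear_value c
  have hc0 : 0 < c := by rw [hc]; positivity
  have hcL' : c * 2 ^ (s - 1) = L' := by
    rw [hc, hL']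
    have h2 : (2:ℝ) ^ s = 2 * 2 ^ (s-1) := by
      rw [← pow_succ']
      congr 1
      omega
    rw [h2]
    field_simp
  -- r < s
  have hrs : r < s := by
    by_contra hcon
    push_neg at hcon
    have h0r : ¬ (r < 0) := by omega
    have hts : s + 1 ≤ r.toNat + 1 := by omega
    have : binomCDF s r = (∑ j ∈ Finset.range (r.toNat + 1), (s.choose j : ℝ)) / 2^s := by
      rw [binomCDF, if_neg h0r]
    have hsum : (∑ j ∈ Finset.range (r.toNat + 1), (s.choose j : ℝ)) = 2^s := by
      rw [← Finset.sum_range_add_sum_Ico _ hts]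
      have h1 : (∑ j ∈ Finset.range (s + 1), (s.choose j : ℝ)) = 2^s := by
        rw [← Nat.cast_sum]
        rw [Nat.sum_range_choose]
        push_cast; ring
      have h2 : (∑ j ∈ Finset.Ico (s+1) (r.toNat+1), (s.choose j : ℝ)) = 0 := by
        apply Finset.sum_eq_zero
        intro j hj
        rw [Finset.mem_Ico] at hj
        rw [Nat.choose_eq_zero_of_lt (by omega)]
        norm_num
      rw [h1, h2, add_zero]
    rw [hsum, div_self h2s.ne'] at this
    rw [this] at hr1
    linarith
  -- main lemma
  have main : ∀ ks : Fin s → K, Function.Injective ks →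
      ∃ j : Fin s, ((T.filter (fun i => g i = a (ks j) i)).card : ℝ) ≤ nc := by
    intro ks hks
    by_contra hbad
    push_neg at hbad
    set Si : Fin L → Finset (Fin s) :=
      fun i => Finset.univ.filter (fun j => g i = a (ks j) i) with hSi
    set m : Fin L → ℕ := fun i => (Si i).card with hm
    clear_value Si m
    have hsum_eq : ∑ j : Fin s, (T.filter (fun i => g i = a (ks j) i)).card = ∑ i ∈ T, m i := by
      simp only [hm, hSi, Finset.card_filter]
      rw [Finset.sum_comm]
    have hNS : ∀ S : Finset (Fin s),
        ((Finset.univ.filter (fun i => Si i = S)).card : ℝ) ≤ c := by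
      intro S
      set b : Fin s → Bool := fun j => decide (j ∈ S) with hb
      have hsub : Finset.univ.filter (fun i => Si i = S) ⊆
          (Finset.univ.filter (fun i : Fin L => ∀ j, a (ks j) i = b j)) ∪
          (Finset.univ.filter (fun i : Fin L => ∀ j, a (ks j) i = !(b j))) := by
        intro i hi
        rw [Finset.mem_filter] at hi
        have hiS : ∀ j, (g i = a (ks j) i) ↔ j ∈ S := by
          intro j
          rw [← hi.2]
          simp [hSi]
        have key : ∀ j, a (ks j) i = if j ∈ S then g i else !(g i) := by
          intro j
          by_cases hj : j ∈ S
          · simp [hj, ((hiS j).2 hj).symm]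
          · simp only [hj, if_false]
            have h1 : ¬ (g i = a (ks j) i) := fun h => hj ((hiS j).1 h)
            cases hgi : g i <;> cases hai : a (ks j) i <;> simp_all
        cases hgi : g i
        · apply Finset.mem_union_right
          simp only [Finset.mem_filter, Finset.mem_univ, true_and]
          intro j
          rw [key j, hb]
          by_cases hj : j ∈ S <;> simp [hj, hgi]
        · apply Finset.mem_union_left
          simp only [Finset.mem_filter, Finset.mem_univ, true_and]
          intro j
          rw [key j, hb]
          by_cases hj : j ∈ S <;> simp [hj, hgi]
      calc ((Finset.univ.filter (fun i => Si i = S)).card : ℝ)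
          ≤ (((Finset.univ.filter (fun i : Fin L => ∀ j, a (ks j) i = b j)) ∪
              (Finset.univ.filter (fun i : Fin L => ∀ j, a (ks j) i = !(b j)))).card : ℝ) := by
            exact_mod_cast Finset.card_le_card hsub
        _ ≤ ((Finset.univ.filter (fun i : Fin L => ∀ j, a (ks j) i = b j)).card : ℝ)
            + ((Finset.univ.filter (fun i : Fin L => ∀ j, a (ks j) i = !(b j))).card : ℝ) := by
            exact_mod_cast Finset.card_union_le _ _
        _ ≤ ((L:ℝ) / 2^s + W) + ((L:ℝ) / 2^s + W) :=
            add_le_add (hpatt ks hks b) (hpatt ks hks (fun j => !(b j)))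
        _ = c := by rw [hc]; ring
    have count : ∀ lam : ℕ,
        ((∑ j : Fin s, (T.filter (fun i => g i = a (ks j) i)).card : ℕ) : ℝ)
          ≤ (lam : ℝ) * n
            + c * ∑ j ∈ Finset.range (s+1), ((j - lam : ℕ) : ℝ) * (s.choose j : ℝ) := by
      intro lam
      have step1 : ∑ i ∈ T, m i ≤ lam * n + ∑ i : Fin L, (m i - lam) := by
        calc ∑ i ∈ T, m i ≤ ∑ i ∈ T, (lam + (m i - lam)) :=
              Finset.sum_le_sum (fun i _ => le_add_tsub)
          _ = lam * n + ∑ i ∈ T, (m i - lam) := by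
              rw [Finset.sum_add_distrib, Finset.sum_const, hT, smul_eq_mul]
              ring
          _ ≤ lam * n + ∑ i : Fin L, (m i - lam) :=
              Nat.add_le_add_left
                (Finset.sum_le_sum_of_subset (Finset.subset_univ T)) _
      have step2 : ∑ i : Fin L, (m i - lam)
          = ∑ S : Finset (Fin s),
              (S.card - lam) * (Finset.univ.filter (fun i => Si i = S)).card := by
        rw [← Finset.sum_fiberwise Finset.univ Si (fun i => m i - lam)]
        apply Finset.sum_congr rfl
        intro S _
        have h1 : ∀ i ∈ Finset.univ.filter (fun i => Si i = S), m i - lam = S.card - lam := by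
          intro i hi
          rw [Finset.mem_filter] at hi
          simp only [hm]
          rw [hi.2]
        rw [Finset.sum_congr rfl h1, Finset.sum_const, smul_eq_mul, mul_comm]
      have step3 : ((∑ S : Finset (Fin s),
            (S.card - lam) * (Finset.univ.filter (fun i => Si i = S)).card : ℕ) : ℝ)
          ≤ c * ∑ S : Finset (Fin s), ((S.card - lam : ℕ) : ℝ) := by
        push_cast
        rw [Finset.mul_sum]
        apply Finset.sum_le_sum
        intro S _
        rw [mul_comm c]
        exact mul_le_mul_of_nonneg_left (hNS S) (by positivity)
      have step4 : ∑ S : Finset (Fin s), (S.card - lam)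
          = ∑ j ∈ Finset.range (s+1), (j - lam) * s.choose j := by
        have hmap : ∀ S : Finset (Fin s), S ∈ Finset.univ → S.card ∈ Finset.range (s+1) := by
          intro S _
          rw [Finset.mem_range]
          have := Finset.card_le_univ S
          simp only [Finset.card_univ, Fintype.card_fin] at this
          omega
        rw [← Finset.sum_fiberwise_of_maps_to hmap (fun S => S.card - lam)]
        apply Finset.sum_congr rfl
        intro j hj
        have h1 : ∀ S ∈ Finset.univ.filter (fun S : Finset (Fin s) => S.card = j),
            S.card - lam = j - lam := by
          intro S hS
          rw [Finset.mem_filter] at hS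
          rw [hS.2]
        rw [Finset.sum_congr rfl h1, Finset.sum_const, smul_eq_mul]
        have h2 : (Finset.univ.filter (fun S : Finset (Fin s) => S.card = j))
            = Finset.powersetCard j (Finset.univ : Finset (Fin s)) := by
          rw [Finset.powersetCard_eq_filter, Finset.powerset_univ]
        rw [h2, Finset.card_powersetCard, Finset.card_univ, Fintype.card_fin, mul_comm]
      have hc4 : (∑ S : Finset (Fin s), ((S.card - lam : ℕ) : ℝ))
          = ∑ j ∈ Finset.range (s+1), ((j - lam : ℕ) : ℝ) * (s.choose j : ℝ) := by
        rw [← Nat.cast_sum, step4]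
        push_cast
        rfl
      calc ((∑ j : Fin s, (T.filter (fun i => g i = a (ks j) i)).card : ℕ) : ℝ)
          = ((∑ i ∈ T, m i : ℕ) : ℝ) := by rw [hsum_eq]
        _ ≤ ((lam * n + ∑ i : Fin L, (m i - lam) : ℕ) : ℝ) := Nat.cast_le.2 step1
        _ = (lam : ℝ) * n + ((∑ S : Finset (Fin s),
              (S.card - lam) * (Finset.univ.filter (fun i => Si i = S)).card : ℕ) : ℝ) := by
            rw [step2]; push_cast; ring
        _ ≤ (lam : ℝ) * n + c * ∑ S : Finset (Fin s), ((S.card - lam : ℕ) : ℝ) := by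
            linarith [step3]
        _ = (lam : ℝ) * n
            + c * ∑ j ∈ Finset.range (s+1), ((j - lam : ℕ) : ℝ) * (s.choose j : ℝ) := by
            rw [hc4]
    have hne : Nonempty (Fin s) := ⟨⟨0, by omega⟩⟩
    have hlt : (s:ℝ) * nc
        < ((∑ j : Fin s, (T.filter (fun i => g i = a (ks j) i)).card : ℕ) : ℝ) := by
      push_cast
      have h := Finset.sum_lt_sum_of_nonempty (Finset.univ_nonempty (α := Fin s))
        (f := fun _ : Fin s => nc)
        (g := fun j : Fin s => ((T.filter (fun i => g i = a (ks j) i)).card : ℝ))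
        (fun j _ => hbad j)
      simpa [Finset.sum_const, Finset.card_univ, mul_comm] using h
    rcases eq_or_lt_of_le hr with hrneg | hr0
    · -- r = -1
      have hb1 : binomCDF (s-1) r = 0 := by rw [binomCDF, if_pos (by omega)]
      have hb2 : binomCDF s r = 0 := by rw [binomCDF, if_pos (by omega)]
      have hrr : (r : ℝ) = -1 := by rw [← hrneg]; norm_num
      have hncn : nc = n := by
        rw [hnc, hb1, hb2, hrr]
        rw [show (s:ℝ) - (-1) - 1 = s by ring, div_self hspos.ne']
        rw [← hγ'L']
        ring
      have hcard : ((∑ j : Fin s, (T.filter (fun i => g i = a (ks j) i)).card : ℕ) : ℝ)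
          ≤ (s:ℝ) * n := by
        have : ∀ j : Fin s, (T.filter (fun i => g i = a (ks j) i)).card ≤ n := by
          intro j
          rw [← hT]
          exact Finset.card_le_card (Finset.filter_subset _ _)
        calc ((∑ j : Fin s, (T.filter (fun i => g i = a (ks j) i)).card : ℕ) : ℝ)
            ≤ ((∑ _j : Fin s, n : ℕ) : ℝ) :=
              Nat.cast_le.2 (Finset.sum_le_sum (fun j _ => this j))
          _ = (s:ℝ) * n := by push_cast; simp [mul_comm]
      rw [hncn] at hlt
      linarith
    · -- 0 ≤ r
      have hr0' : (0:ℤ) ≤ r := by omega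
      set rn : ℕ := r.toNat with hrn
      have hrnr : (rn : ℤ) = r := Int.toNat_of_nonneg hr0'
      have hrns : rn + 1 ≤ s := by omega
      set lam : ℕ := s - 1 - rn with hlam
      have hlamr : (s:ℝ) - r - 1 = (lam : ℝ) := by
        have : (lam : ℤ) = (s:ℤ) - r - 1 := by omega
        have := congrArg (Int.cast : ℤ → ℝ) this
        push_cast at this
        linarith
      set A : ℝ := ∑ j ∈ Finset.range (rn+1), (s.choose j : ℝ) with hA
      set A' : ℝ := ∑ j ∈ Finset.range (rn+1), ((s-1).choose j : ℝ) with hA'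
      clear_value A A'
      have hbcdf1 : binomCDF s r = A / 2^s := by
        rw [binomCDF, if_neg (by omega), hA, hrn]
      have hbcdf2 : binomCDF (s-1) r = A' / 2^(s-1) := by
        rw [binomCDF, if_neg (by omega), hA', hrn]
      have hkeyR : (∑ j ∈ Finset.range (s+1), ((j - lam : ℕ) : ℝ) * (s.choose j : ℝ))
          + (lam:ℝ) * A = (s:ℝ) * A' := by
        have hk := key_nat hrns
        have := congrArg (Nat.cast : ℕ → ℝ) hk
        push_cast at this
        rw [hA, hA']
        convert this using 2
      have h2pow : (2:ℝ)^s = 2 * 2^(s-1) := by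
        rw [← pow_succ']
        congr 1
        omega
      have halg : (lam:ℝ) * n
          + c * (∑ j ∈ Finset.range (s+1), ((j - lam : ℕ) : ℝ) * (s.choose j : ℝ))
          = s * nc := by
        have hγ'' : γ' = (n:ℝ) / L' := by
          field_simp [← hγ'L']
          exact hγ'L'
        have e1 : (s:ℝ) * nc = s * c * A' + (lam:ℝ) * n - (lam:ℝ) * (c * A) := by
          have hp : (0:ℝ) < (2:ℝ)^(s-1) := by positivity
          rw [hnc, hbcdf1, hbcdf2, hlamr, hγ'', ← hcL', h2pow]
          exact alg1 c (2^(s-1)) A A' lam s n hp.ne' hspos.ne' hc0.ne'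
        have e2 : (s:ℝ) * (c * A') = c * (∑ j ∈ Finset.range (s+1),
            ((j - lam : ℕ) : ℝ) * (s.choose j : ℝ)) + c * ((lam:ℝ) * A) := by
          linear_combination c * hkeyR.symm
        linear_combination -e1 - e2
      linarith [count lam, halg, hlt]
  have hmain_card : Nat.card {k : K // ((T.filter (fun i => g i = a k i)).card : ℝ) > nc}
      ≤ s - 1 := by
    by_contra hcon
    push_neg at hcon
    have hsle : s ≤ Nat.card {k : K // ((T.filter (fun i => g i = a k i)).card : ℝ) > nc} := by
      omega
    rw [Nat.card_eq_fintype_card] at hsle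
    have hcard : Fintype.card (Fin s)
        ≤ Fintype.card {k : K // ((T.filter (fun i => g i = a k i)).card : ℝ) > nc} := by
      simpa using hsle
    obtain ⟨f⟩ := Function.Embedding.nonempty_of_card_le hcard
    obtain ⟨j, hj⟩ := main (fun j => (f j).1) (fun j1 j2 h => f.injective (Subtype.ext h))
    exact absurd (f j).2 (not_lt.2 hj)
  have hcompl : Nat.card {k : K // ((T.filter (fun i => g i = a k i)).card : ℝ) ≤ nc}
      = Fintype.card K
        - Nat.card {k : K // ((T.filter (fun i => g i = a k i)).card : ℝ) > nc} := by
    have e : {k : K // ((T.filter (fun i => g i = a k i)).card : ℝ) ≤ nc}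
        ≃ {k : K // ¬ (((T.filter (fun i => g i = a k i)).card : ℝ) > nc)} :=
      Equiv.subtypeEquivRight (fun k => not_lt.symm)
    rw [Nat.card_congr e, Nat.card_eq_fintype_card, Nat.card_eq_fintype_card,
      Fintype.card_subtype_compl]
  refine ⟨hmain_card, ?_⟩
  have hBK : Nat.card {k : K // ((T.filter (fun i => g i = a k i)).card : ℝ) > nc}
      ≤ Fintype.card K := by
    rw [Nat.card_eq_fintype_card]
    exact Fintype.card_subtype_le _
  have hKpos : (0:ℝ) < Fintype.card K := by
    have : 0 < Fintype.card K := by omega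
    exact_mod_cast this
  rw [hcompl]
  have hcast : ((Fintype.card K
      - Nat.card {k : K // ((T.filter (fun i => g i = a k i)).card : ℝ) > nc} : ℕ) : ℝ)
      = (Fintype.card K : ℝ)
        - (Nat.card {k : K // ((T.filter (fun i => g i = a k i)).card : ℝ) > nc} : ℝ) :=
    Nat.cast_sub hBK
  rw [ge_iff_le, hcast]
  have hBs : (Nat.card {k : K // ((T.filter (fun i => g i = a k i)).card : ℝ) > nc} : ℝ)
      ≤ (s : ℝ) := by
    have : Nat.card {k : K // ((T.filter (fun i => g i = a k i)).card : ℝ) > nc} ≤ s := by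
      omega
    exact_mod_cast this
  have h1 : (1:ℝ) - s / Fintype.card K = ((Fintype.card K : ℝ) - s) / Fintype.card K := by
    field_simp
  rw [h1]
  gcongr
end

section
/- Let L be a positive integer, 𝒦 a finite set of keys, s and S integers with 2 ≤ s ≤ S ≤ |𝒦|, W ≥ 0 a real number, and a : 𝒦 → Fin L → {0,1} a family of binary sequences such that for all distinct keys k₁,…,k_s ∈ 𝒦 and all bits b₁,…,b_s ∈ {0,1}, the pattern count #{i ∈ Fin L : a(k₁)(i)=b₁, …, a(k_s)(i)=b_s} is at most L/2^s + W. Set L′ = L + 2^s·W and, for a real γ with 0 < γ ≤ 1 such that n = γL is an integer, set γ′ = γ·L/L′. Define ν* to be the supremum of F(ν) = ∑_{t=0}^{⌊S/2⌋} C(S−1,t)·ν_t + ∑_{t=⌊S/2⌋+1}^{S} C(S−1,t−1)·ν_t over all ν = (ν₀,…,ν_S) ∈ ℝ^{S+1} satisfying ν_t ≥ 0 for all t, ν_t = ν_{S−t} for all t, ∑_{t=0}^{S} C(S,t)·ν_t = γ′, and ∑_{t=0}^{S−s} C(S−s,t)·ν_{h+t} ≤ 2^{−s} for every h = 0,…,s.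 Then for every T ⊆ Fin L with |T| = n and every guessing function g : Fin L → {0,1}, the number of keys k ∈ 𝒦 with #{i ∈ T : g(i) = a(k)(i)} > ν*·L′ is at most S − 1; equivalently, a uniformly random key k satisfies #{i ∈ T : g(i) = a(k)(i)} ≤ ν*·L′ with probability at least 1 − S/|𝒦|. -/
open Finset

private lemma choose_swap (N y t : ℕ) :
    N.choose y * (N - y).choose t = N.choose t * (N - t).choose y := by
  rcases le_or_gt (y + t) N with h | h
  · have h1 := Nat.choose_mul (n := N) (show y ≤ y + t by omega)
    have h2 := Nat.choose_mul (n := N) (show t ≤ y + t by omega)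
    rw [show y + t - y = t by omega] at h1
    rw [show y + t - t = y by omega] at h2
    rw [Nat.choose_symm_add] at h1
    exact h1.symm.trans h2
  · have e1 : N.choose y * (N - y).choose t = 0 := by
      rcases le_or_gt y N with hy | hy
      · have : N - y < t := by omega
        simp [Nat.choose_eq_zero_of_lt this]
      · simp [Nat.choose_eq_zero_of_lt hy]
    have e2 : N.choose t * (N - t).choose y = 0 := by
      rcases le_or_gt t N with ht | ht
      · have : N - t < y := by omega
        simp [Nat.choose_eq_zero_of_lt this]
      · simp [Nat.choose_eq_zero_of_lt ht]
    rw [e1, e2]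

private lemma choose_window {S s g t : ℕ} (hg : g ≤ s) (hsS : s ≤ S) (ht : t ≤ S - s) :
    (S - s).choose t * (S.choose s * s.choose g) =
      (g + t).choose g * ((S - (g + t)).choose (s - g) * S.choose (g + t)) := by
  have h1 : S.choose s * s.choose g = S.choose g * (S - g).choose (s - g) :=
    Nat.choose_mul hg
  have h2 : S.choose (g + t) * (g + t).choose g = S.choose g * (S - g).choose t := by
    have := Nat.choose_mul (n := S) (show g ≤ g + t by omega)
    rwa [show g + t - g = t by omega] at this
  have h3 := choose_swap (S - g) (s - g) t
  rw [show S - g - (s - g) = S - s by omega, show S - g - t = S - (g + t) by omega] at h3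
  calc (S - s).choose t * (S.choose s * s.choose g)
      = S.choose g * ((S - g).choose (s - g) * (S - s).choose t) := by rw [h1]; ring
    _ = S.choose g * ((S - g).choose t * (S - (g + t)).choose (s - g)) := by rw [h3]
    _ = (S.choose (g + t) * (g + t).choose g) * (S - (g + t)).choose (s - g) := by
        rw [h2]; ring
    _ = _ := by ring

private lemma choose_low {S t : ℕ} (ht : t ≤ S - 1) (hS : 1 ≤ S) :
    S.choose t * (S - t) = S * (S - 1).choose t := by
  have h := Nat.add_one_mul_choose_eq (S - 1) (S - 1 - t)
  rw [show S-1+1 = S by omega, show S-1-t+1 = S - t by omega,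
    Nat.choose_symm ht, Nat.choose_symm (show t ≤ S by omega)] at h
  exact h.symm

private lemma choose_high {S t : ℕ} (ht1 : 1 ≤ t) (htS : t ≤ S) :
    S.choose t * t = S * (S - 1).choose (t - 1) := by
  have h := Nat.add_one_mul_choose_eq (S - 1) (t - 1)
  rw [show S-1+1 = S by omega, show t-1+1 = t by omega] at h
  exact h.symm

set_option maxHeartbeats 2000000 in
theorem stmt3 {K : Type*} [Fintype K] (L : ℕ) (hL : 0 < L)
    (s S : ℕ) (hs2 : 2 ≤ s) (hsS : s ≤ S) (hSK : S ≤ Fintype.card K)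
    (W : ℝ) (hW : 0 ≤ W)
    (a : K → Fin L → Bool)
    (hpatt : ∀ ks : Fin s → K, Function.Injective ks → ∀ b : Fin s → Bool,
      ((Finset.univ.filter (fun i : Fin L => ∀ j, a (ks j) i = b j)).card : ℝ) ≤
        L / 2 ^ s + W)
    (γ : ℝ) (hγ0 : 0 < γ) (hγ1 : γ ≤ 1)
    (n : ℕ) (hn : (n : ℝ) = γ * L)
    (L' γ' : ℝ) (hL' : L' = L + 2 ^ s * W) (hγ' : γ' = γ * L / L')
    (νstar : ℝ)
    (hνstar : νstar = sSup {x : ℝ | ∃ ν : ℕ → ℝ,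
      (∀ t ≤ S, 0 ≤ ν t) ∧
      (∀ t ≤ S, ν t = ν (S - t)) ∧
      (∑ t ∈ Finset.range (S + 1), (S.choose t : ℝ) * ν t = γ') ∧
      (∀ h ≤ s, ∑ t ∈ Finset.range (S - s + 1), ((S - s).choose t : ℝ) * ν (h + t) ≤
        1 / 2 ^ s) ∧
      x = ∑ t ∈ Finset.range (S / 2 + 1), ((S - 1).choose t : ℝ) * ν t +
          ∑ t ∈ Finset.Icc (S / 2 + 1) S, ((S - 1).choose (t - 1) : ℝ) * ν t}) :
    ∀ T : Finset (Fin L), T.card = n → ∀ g : Fin L → Bool,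
      Nat.card {k : K //
          ((T.filter (fun i => g i = a k i)).card : ℝ) > νstar * L'} ≤ S - 1 ∧
      (Nat.card {k : K //
          ((T.filter (fun i => g i = a k i)).card : ℝ) ≤ νstar * L'} : ℝ)
          / Fintype.card K ≥ 1 - S / Fintype.card K := by
  intro T hT g
  classical
  -- basic positivity facts
  have hLpos : (0:ℝ) < L := by exact_mod_cast hL
  have h2s : (0:ℝ) < 2 ^ s := by positivity
  have hL'pos : 0 < L' := by
    have : (0:ℝ) ≤ 2 ^ s * W := by positivity
    rw [hL']; linarith
  have hSpos : 0 < S := by omega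
  have hSR : (0:ℝ) < S := by exact_mod_cast hSpos
  have hγ'pos : 0 < γ' := by
    rw [hγ']; positivity
  have hpatt' : ∀ ks : Fin s → K, Function.Injective ks → ∀ b : Fin s → Bool,
      ((Finset.univ.filter (fun i : Fin L => ∀ j, a (ks j) i = b j)).card : ℝ) ≤
        L' / 2 ^ s := by
    intro ks hks b
    have := hpatt ks hks b
    have he : L / 2 ^ s + W = L' / 2 ^ s := by
      rw [hL']; field_simp
    linarith [this, he.symm.le]
  -- every member of the LP set is at most νstar
  have hle : ∀ x ∈ {x : ℝ | ∃ ν : ℕ → ℝ,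
      (∀ t ≤ S, 0 ≤ ν t) ∧
      (∀ t ≤ S, ν t = ν (S - t)) ∧
      (∑ t ∈ Finset.range (S + 1), (S.choose t : ℝ) * ν t = γ') ∧
      (∀ h ≤ s, ∑ t ∈ Finset.range (S - s + 1), ((S - s).choose t : ℝ) * ν (h + t) ≤
        1 / 2 ^ s) ∧
      x = ∑ t ∈ Finset.range (S / 2 + 1), ((S - 1).choose t : ℝ) * ν t +
          ∑ t ∈ Finset.Icc (S / 2 + 1) S, ((S - 1).choose (t - 1) : ℝ) * ν t},
      x ≤ νstar := by
    intro x hx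
    rw [hνstar]
    refine le_csSup ?_ hx
    refine ⟨∑ t ∈ Finset.range (S / 2 + 1), ((S - 1).choose t : ℝ) * γ' +
          ∑ t ∈ Finset.Icc (S / 2 + 1) S, ((S - 1).choose (t - 1) : ℝ) * γ', ?_⟩
    rintro y ⟨ν, hν0, -, hsum, -, hy⟩
    have hνle : ∀ t ≤ S, ν t ≤ γ' := by
      intro t ht
      have h1 : (S.choose t : ℝ) * ν t ≤ γ' := by
        rw [← hsum]
        refine Finset.single_le_sum (f := fun t => (S.choose t : ℝ) * ν t) ?_ ?_
        · intro u hu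
          have := hν0 u (by simpa using Nat.lt_succ_iff.mp (mem_range.mp hu))
          positivity
        · exact mem_range.mpr (Nat.lt_succ_of_le ht)
      have h2 : ν t ≤ (S.choose t : ℝ) * ν t := by
        have hc1 : (1:ℝ) ≤ (S.choose t : ℝ) := by
          exact_mod_cast Nat.one_le_iff_ne_zero.mpr (Nat.choose_pos ht).ne'
        nlinarith [hν0 t ht]
      linarith
    rw [hy]
    refine add_le_add (Finset.sum_le_sum ?_) (Finset.sum_le_sum ?_)
    · intro t ht
      have htS : t ≤ S := by have := mem_range.mp ht; omega
      exact mul_le_mul_of_nonneg_left (hνle t htS) (Nat.cast_nonneg _)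
    · intro t ht
      have htS : t ≤ S := by have := mem_Icc.mp ht; omega
      exact mul_le_mul_of_nonneg_left (hνle t htS) (Nat.cast_nonneg _)
  -- bad keys
  set Bd : Finset K :=
    univ.filter (fun k => ((T.filter (fun i => g i = a k i)).card : ℝ) > νstar * L')
    with hBd
  have hmain : Bd.card ≤ S - 1 := by
    by_contra hcon
    have hBS : S ≤ Bd.card := by omega
    obtain ⟨B', hB'sub, hB'card⟩ := Finset.exists_subset_card_eq hBS
    set e : Fin S → K := fun j => ((B'.equivFinOfCardEq hB'card).symm j : K) with he
    have he_inj : Function.Injective e := by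
      intro j1 j2 hj
      exact (B'.equivFinOfCardEq hB'card).symm.injective (Subtype.coe_injective hj)
    have he_bad : ∀ j : Fin S,
        νstar * L' < ((T.filter (fun i => g i = a (e j) i)).card : ℝ) := by
      intro j
      have hmem : e j ∈ Bd := hB'sub ((B'.equivFinOfCardEq hB'card).symm j).2
      rw [hBd, mem_filter] at hmem
      exact hmem.2
    -- agreement sets and counts
    set Agr : Fin L → Finset (Fin S) :=
      fun i => univ.filter (fun j => a (e j) i = g i) with hAgr
    set c : Fin L → ℕ := fun i => (Agr i).card with hc
    set m : ℕ → ℕ := fun t => (T.filter (fun i => c i = t)).card with hm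
    set ν : ℕ → ℝ := fun t => ((m t : ℝ) + (m (S - t) : ℝ)) / (2 * (S.choose t : ℝ) * L')
      with hν
    have hcle : ∀ i, c i ≤ S := by
      intro i
      have := Finset.card_filter_le (univ : Finset (Fin S)) (fun j => a (e j) i = g i)
      simpa [hc, hAgr] using this
    -- fiberwise summation
    have hfiber : ∀ ψ : ℕ → ℝ,
        ∑ i ∈ T, ψ (c i) = ∑ t ∈ range (S + 1), (m t : ℝ) * ψ t := by
      intro ψ
      rw [← Finset.sum_fiberwise_of_maps_to
        (fun i _ => mem_range.mpr (Nat.lt_succ_of_le (hcle i))) (fun i => ψ (c i))]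
      refine sum_congr rfl fun t _ => ?_
      have : ∀ i ∈ T.filter (fun i => c i = t), ψ (c i) = ψ t := by
        intro i hi
        rw [(mem_filter.mp hi).2]
      rw [sum_congr rfl this, sum_const, nsmul_eq_mul, hm]
    have hmsum : ∑ t ∈ range (S + 1), m t = n := by
      rw [← hT]
      exact (Finset.card_eq_sum_card_fiberwise
        (fun i _ => mem_range.mpr (Nat.lt_succ_of_le (hcle i)))).symm
    -- ν is admissible
    have hν0 : ∀ t ≤ S, 0 ≤ ν t := by
      intro t _
      rw [hν]
      positivity
    have hνsymm : ∀ t ≤ S, ν t = ν (S - t) := by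
      intro t ht
      rw [hν]
      simp only
      rw [Nat.sub_sub_self ht, Nat.choose_symm ht, add_comm]
    have hchoose_ne : ∀ t ≤ S, ((S.choose t : ℝ)) ≠ 0 := by
      intro t ht
      exact_mod_cast (Nat.choose_pos ht).ne'
    have hmass : ∑ t ∈ range (S + 1), (S.choose t : ℝ) * ν t = γ' := by
      have hterm : ∀ t ∈ range (S + 1),
          (S.choose t : ℝ) * ν t = ((m t : ℝ) + (m (S - t) : ℝ)) / (2 * L') := by
        intro t ht
        have hC := hchoose_ne t (by have := mem_range.mp ht; omega)
        rw [hν]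
        field_simp
      rw [sum_congr rfl hterm, ← sum_div]
      have hrefl : ∑ t ∈ range (S + 1), ((m (S - t) : ℝ)) =
          ∑ t ∈ range (S + 1), ((m t : ℝ)) := by
        have := Finset.sum_range_reflect (fun t => (m t : ℝ)) (S + 1)
        simpa [Nat.add_sub_cancel] using this
      have hsum2 : ∑ t ∈ range (S + 1), ((m t : ℝ) + (m (S - t) : ℝ)) = 2 * n := by
        rw [sum_add_distrib, hrefl, ← two_mul]
        congr 1
        exact_mod_cast congrArg (Nat.cast (R := ℝ)) hmsum
      rw [hsum2, hγ', ← hn]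
      field_simp
    -- per-pair pattern bound
    have hkey_pair : ∀ A B : Finset (Fin S), (A ∪ B).card = s → Disjoint A B →
        ((T.filter (fun i => A ⊆ Agr i ∧ B ⊆ (Agr i)ᶜ)).card : ℝ)
          + ((T.filter (fun i => B ⊆ Agr i ∧ A ⊆ (Agr i)ᶜ)).card : ℝ)
          ≤ 2 * (L' / 2 ^ s) := by
      intro A B hU hD
      set f := (A ∪ B).orderEmbOfFin hU with hf
      have hks_inj : Function.Injective (fun x : Fin s => e (f x)) :=
        fun x y hxy => f.injective (he_inj hxy)
      set PA : Finset (Fin L) := univ.filter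
        (fun i => ∀ x : Fin s, a (e (f x)) i = decide (f x ∈ A)) with hPAdef
      set PB : Finset (Fin L) := univ.filter
        (fun i => ∀ x : Fin s, a (e (f x)) i = decide (f x ∈ B)) with hPBdef
      have hPA : (PA.card : ℝ) ≤ L' / 2 ^ s := by
        have := hpatt' _ hks_inj (fun x => decide (f x ∈ A))
        simpa [hPAdef] using this
      have hPB : (PB.card : ℝ) ≤ L' / 2 ^ s := by
        have := hpatt' _ hks_inj (fun x => decide (f x ∈ B))
        simpa [hPBdef] using this
      have hmem : ∀ (X Y : Finset (Fin S)) (i : Fin L), X ∪ Y = A ∪ B →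
          X ⊆ Agr i → Y ⊆ (Agr i)ᶜ →
          (∀ x : Fin s, a (e (f x)) i = decide (f x ∈ X)) ∨
          (∀ x : Fin s, a (e (f x)) i = decide (f x ∈ Y)) := by
        intro X Y i hXY hX hY
        have hXnY : ∀ j ∈ X, j ∉ Y := by
          intro j hj hj'
          exact (Finset.mem_compl.mp (hY hj')) (hX hj)
        have hcases : ∀ x : Fin s,
            (f x ∈ X ∧ f x ∉ Y ∧ a (e (f x)) i = g i) ∨
            (f x ∈ Y ∧ f x ∉ X ∧ ¬ a (e (f x)) i = g i) := by
          intro x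
          have hfx : f x ∈ X ∪ Y := by
            rw [hXY]; exact Finset.orderEmbOfFin_mem _ hU x
          have hX' : ∀ j ∈ X, a (e j) i = g i := by
            intro j hj
            have := hX hj
            simp only [hAgr, mem_filter, mem_univ, true_and] at this
            exact this
          have hY' : ∀ j ∈ Y, ¬ a (e j) i = g i := by
            intro j hj
            have := Finset.mem_compl.mp (hY hj)
            simp only [hAgr, mem_filter, mem_univ, true_and] at this
            exact this
          by_cases hx : f x ∈ X
          · exact Or.inl ⟨hx, hXnY _ hx, hX' _ hx⟩
          · have hy : f x ∈ Y := by
              rcases mem_union.mp hfx with h | h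
              · exact absurd h hx
              · exact h
            exact Or.inr ⟨hy, hx, hY' _ hy⟩
        cases hg : g i with
        | false =>
          right
          intro x
          rcases hcases x with ⟨-, hx, ha⟩ | ⟨hx, -, ha⟩
          · rw [hg] at ha
            simp [hx, ha]
          · rw [hg] at ha
            have ha' : a (e (f x)) i = true := by
              cases hab : a (e (f x)) i
              · exact absurd hab ha
              · rfl
            simp [hx, ha']
        | true =>
          left
          intro x
          rcases hcases x with ⟨hx, -, ha⟩ | ⟨-, hx, ha⟩
          · rw [hg] at ha
            simp [hx, ha]
          · rw [hg] at ha
            have ha' : a (e (f x)) i = false := by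
              cases hab : a (e (f x)) i
              · rfl
              · exact absurd hab ha
            simp [hx, ha']
      have hsub1 : T.filter (fun i => A ⊆ Agr i ∧ B ⊆ (Agr i)ᶜ) ⊆ PA ∪ PB := by
        intro i hi
        obtain ⟨hiT, h1, h2⟩ := mem_filter.mp hi
        rcases hmem A B i rfl h1 h2 with h | h
        · exact mem_union.mpr (Or.inl (mem_filter.mpr ⟨mem_univ _, h⟩))
        · exact mem_union.mpr (Or.inr (mem_filter.mpr ⟨mem_univ _, h⟩))
      have hsub2 : T.filter (fun i => B ⊆ Agr i ∧ A ⊆ (Agr i)ᶜ) ⊆ PA ∪ PB := by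
        intro i hi
        obtain ⟨hiT, h1, h2⟩ := mem_filter.mp hi
        rcases hmem B A i (union_comm B A) h1 h2 with h | h
        · exact mem_union.mpr (Or.inr (mem_filter.mpr ⟨mem_univ _, h⟩))
        · exact mem_union.mpr (Or.inl (mem_filter.mpr ⟨mem_univ _, h⟩))
      have hdisj : Disjoint (T.filter (fun i => A ⊆ Agr i ∧ B ⊆ (Agr i)ᶜ))
          (T.filter (fun i => B ⊆ Agr i ∧ A ⊆ (Agr i)ᶜ)) := by
        rw [Finset.disjoint_left]
        intro i hi1 hi2
        have h1 := (mem_filter.mp hi1).2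
        have h2 := (mem_filter.mp hi2).2
        have hABne : (A ∪ B).Nonempty := by
          rw [← Finset.card_pos, hU]; omega
        obtain ⟨j, hj⟩ := hABne
        rcases mem_union.mp hj with hjA | hjB
        · exact (Finset.mem_compl.mp (h2.2 hjA)) (h1.1 hjA)
        · exact (Finset.mem_compl.mp (h1.2 hjB)) (h2.1 hjB)
      have hcard : (T.filter (fun i => A ⊆ Agr i ∧ B ⊆ (Agr i)ᶜ)).card
          + (T.filter (fun i => B ⊆ Agr i ∧ A ⊆ (Agr i)ᶜ)).card
          ≤ PA.card + PB.card := by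
        rw [← card_union_of_disjoint hdisj]
        exact le_trans (card_le_card (union_subset hsub1 hsub2)) (card_union_le _ _)
      have hcard' : ((T.filter (fun i => A ⊆ Agr i ∧ B ⊆ (Agr i)ᶜ)).card : ℝ)
          + ((T.filter (fun i => B ⊆ Agr i ∧ A ⊆ (Agr i)ᶜ)).card : ℝ)
          ≤ (PA.card : ℝ) + (PB.card : ℝ) := by exact_mod_cast hcard
      linarith
    -- counting pairs
    set Q : ℕ → Finset (Finset (Fin S) × Finset (Fin S)) :=
      fun gg => (univ.powersetCard gg) ×ˢ (univ.powersetCard (s - gg)) with hQ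
    set Nc : Finset (Fin S) → Finset (Fin S) → ℕ :=
      fun A B => (T.filter (fun i => A ⊆ Agr i ∧ B ⊆ (Agr i)ᶜ)).card with hNc
    have hC12 : ∀ gg : ℕ, ∀ i : Fin L,
        (c i).choose gg * (S - c i).choose (s - gg) =
          ((Q gg).filter (fun p => p.1 ⊆ Agr i ∧ p.2 ⊆ (Agr i)ᶜ)).card := by
      intro gg i
      have hQf : (Q gg).filter (fun p => p.1 ⊆ Agr i ∧ p.2 ⊆ (Agr i)ᶜ)
          = ((Agr i).powersetCard gg) ×ˢ (((Agr i)ᶜ).powersetCard (s - gg)) := by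
        ext p
        simp only [hQ, mem_filter, mem_product, Finset.mem_powersetCard, subset_univ,
          true_and]
        tauto
      rw [hQf, card_product, Finset.card_powersetCard, Finset.card_powersetCard,
        card_compl, Fintype.card_fin]
    have hC3 : ∀ gg : ℕ,
        ∑ i ∈ T, (c i).choose gg * (S - c i).choose (s - gg) =
          ∑ p ∈ Q gg, Nc p.1 p.2 := by
      intro gg
      calc ∑ i ∈ T, (c i).choose gg * (S - c i).choose (s - gg)
          = ∑ i ∈ T, ∑ p ∈ Q gg, (if p.1 ⊆ Agr i ∧ p.2 ⊆ (Agr i)ᶜ then 1 else 0) := by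
            refine sum_congr rfl fun i _ => ?_
            rw [hC12 gg i, card_filter]
        _ = ∑ p ∈ Q gg, ∑ i ∈ T, (if p.1 ⊆ Agr i ∧ p.2 ⊆ (Agr i)ᶜ then 1 else 0) :=
            Finset.sum_comm
        _ = ∑ p ∈ Q gg, Nc p.1 p.2 := by
            refine sum_congr rfl fun p _ => ?_
            simp only [hNc]
            rw [card_filter]
    have hNzero : ∀ A B : Finset (Fin S), ¬ Disjoint A B → Nc A B = 0 := by
      intro A B hAB
      obtain ⟨x, hx⟩ := Finset.not_disjoint_iff.mp hAB
      simp only [hNc]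
      rw [Finset.card_eq_zero, Finset.filter_eq_empty_iff]
      rintro i - ⟨h1, h2⟩
      exact (Finset.mem_compl.mp (h2 hx.2)) (h1 hx.1)
    have hQcard : ∀ gg, gg ≤ s → ((Q gg).filter (fun p => Disjoint p.1 p.2)).card
        = S.choose gg * (S - gg).choose (s - gg) := by
      intro gg hgg
      rw [card_filter, hQ]
      simp only
      rw [Finset.sum_product]
      have hinner : ∀ A ∈ (univ : Finset (Fin S)).powersetCard gg,
          (∑ B ∈ (univ : Finset (Fin S)).powersetCard (s - gg),
            if Disjoint A B then 1 else 0) = (S - gg).choose (s - gg) := by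
        intro A hA
        have hAcard : A.card = gg := (Finset.mem_powersetCard.mp hA).2
        rw [← card_filter]
        have hfe : ((univ : Finset (Fin S)).powersetCard (s - gg)).filter
            (fun B => Disjoint A B) = Aᶜ.powersetCard (s - gg) := by
          ext B
          simp only [mem_filter, Finset.mem_powersetCard, subset_univ, true_and]
          constructor
          · rintro ⟨hBcard, hDj⟩
            refine ⟨fun x hxB => Finset.mem_compl.mpr (fun hxA => ?_), hBcard⟩
            exact (Finset.disjoint_left.mp hDj) hxA hxB
          · rintro ⟨hBsub, hBcard⟩
            refine ⟨hBcard, Finset.disjoint_left.mpr fun x hxA hxB => ?_⟩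
            exact (Finset.mem_compl.mp (hBsub hxB)) hxA
        rw [hfe, Finset.card_powersetCard, card_compl, Fintype.card_fin, hAcard]
      rw [sum_congr rfl hinner, sum_const, Finset.card_powersetCard, card_univ,
        Fintype.card_fin, smul_eq_mul]
    -- windows in m-form
    set w : ℕ → ℝ := fun gg => ∑ t ∈ range (S - s + 1),
        ((S - s).choose t : ℝ) * (m (gg + t) : ℝ) / (S.choose (gg + t) : ℝ) with hw
    have hstepB : ∀ gg, gg ≤ s → (S.choose s : ℝ) * (s.choose gg : ℝ) * w gg
        = ∑ t ∈ range (S + 1),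
            (m t : ℝ) * ((t.choose gg * (S - t).choose (s - gg) : ℕ) : ℝ) := by
      intro gg hgg
      have hterm : ∀ t ∈ range (S - s + 1),
          (S.choose s : ℝ) * (s.choose gg : ℝ) *
            (((S - s).choose t : ℝ) * (m (gg + t) : ℝ) / (S.choose (gg + t) : ℝ))
          = (m (gg + t) : ℝ) *
            (((gg + t).choose gg * (S - (gg + t)).choose (s - gg) : ℕ) : ℝ) := by
        intro t ht
        have htle : t ≤ S - s := by have := mem_range.mp ht; omega
        have hCne := hchoose_ne (gg + t) (by omega)
        have hid := choose_window hgg hsS htle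
        have hid' : (((S - s).choose t : ℝ)) * ((S.choose s : ℝ) * (s.choose gg : ℝ))
            = ((gg + t).choose gg : ℝ) *
              ((((S - (gg + t)).choose (s - gg)) : ℝ) * (S.choose (gg + t) : ℝ)) := by
          exact_mod_cast hid
        field_simp
        push_cast
        linear_combination (m (gg + t) : ℝ) * hid'
      have hvan_lo : ∀ t ∈ Ico 0 gg,
          (m t : ℝ) * ((t.choose gg * (S - t).choose (s - gg) : ℕ) : ℝ) = 0 := by
        intro t ht
        have : t < gg := (mem_Ico.mp ht).2
        rw [Nat.choose_eq_zero_of_lt this]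
        simp
      have hvan_hi : ∀ t ∈ Ico (gg + (S - s) + 1) (S + 1),
          (m t : ℝ) * ((t.choose gg * (S - t).choose (s - gg) : ℕ) : ℝ) = 0 := by
        intro t ht
        have h1 := mem_Ico.mp ht
        have : S - t < s - gg := by omega
        rw [Nat.choose_eq_zero_of_lt this]
        simp
      calc (S.choose s : ℝ) * (s.choose gg : ℝ) * w gg
          = ∑ t ∈ range (S - s + 1), (m (gg + t) : ℝ) *
              (((gg + t).choose gg * (S - (gg + t)).choose (s - gg) : ℕ) : ℝ) := by
            rw [hw]
            simp only
            rw [mul_sum]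
            exact sum_congr rfl hterm
        _ = ∑ t ∈ Ico gg (gg + (S - s) + 1), (m t : ℝ) *
              ((t.choose gg * (S - t).choose (s - gg) : ℕ) : ℝ) := by
            rw [Finset.sum_Ico_eq_sum_range,
              show gg + (S - s) + 1 - gg = S - s + 1 by omega]
        _ = ∑ t ∈ range (S + 1), (m t : ℝ) *
              ((t.choose gg * (S - t).choose (s - gg) : ℕ) : ℝ) := by
            rw [range_eq_Ico,
              ← Finset.sum_Ico_consecutive _ (Nat.zero_le gg) (show gg ≤ S + 1 by omega),
              ← Finset.sum_Ico_consecutive _ (show gg ≤ gg + (S - s) + 1 by omega)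
                (show gg + (S - s) + 1 ≤ S + 1 by omega),
              sum_eq_zero hvan_lo, sum_eq_zero hvan_hi]
            ring
    have hwin : ∀ h ≤ s, ∑ t ∈ range (S - s + 1),
        ((S - s).choose t : ℝ) * ν (h + t) ≤ 1 / 2 ^ s := by
      intro h hh
      have hA : ∑ t ∈ range (S - s + 1), ((S - s).choose t : ℝ) * ν (h + t)
          = (w h + w (s - h)) / (2 * L') := by
        have hterm : ∀ t ∈ range (S - s + 1), ((S - s).choose t : ℝ) * ν (h + t)
            = (((S - s).choose t : ℝ) * (m (h + t) : ℝ) / (S.choose (h + t) : ℝ))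
                / (2 * L')
              + (((S - s).choose t : ℝ) * (m (S - (h + t)) : ℝ)
                / (S.choose (h + t) : ℝ)) / (2 * L') := by
          intro t ht
          have htle : t ≤ S - s := by have := mem_range.mp ht; omega
          have hCne := hchoose_ne (h + t) (by omega)
          simp only [hν]
          field_simp
        rw [sum_congr rfl hterm, sum_add_distrib, ← sum_div, ← sum_div]
        have hsecond : ∑ t ∈ range (S - s + 1),
            ((S - s).choose t : ℝ) * (m (S - (h + t)) : ℝ) / (S.choose (h + t) : ℝ)
            = w (s - h) := by
          rw [hw]
          simp only
          rw [← Finset.sum_range_reflect (fun t => ((S - s).choose t : ℝ) *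
            (m ((s - h) + t) : ℝ) / (S.choose ((s - h) + t) : ℝ)) (S - s + 1)]
          refine sum_congr rfl fun j hj => ?_
          have hjle : j ≤ S - s := by have := mem_range.mp hj; omega
          simp only [Nat.add_sub_cancel]
          rw [Nat.choose_symm hjle,
            show (s - h) + (S - s - j) = S - (h + j) by omega,
            show S.choose (S - (h + j)) = S.choose (h + j) from
              Nat.choose_symm (by omega)]
        rw [hsecond, hw]
        simp only
        rw [add_div]
      rw [hA]
      have hchpos : (0:ℝ) < (S.choose s : ℝ) * (s.choose h : ℝ) := by
        have h1 : 0 < S.choose s := Nat.choose_pos hsS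
        have h2 : 0 < s.choose h := Nat.choose_pos hh
        have h1' : (0:ℝ) < (S.choose s : ℝ) := by exact_mod_cast h1
        have h2' : (0:ℝ) < (s.choose h : ℝ) := by exact_mod_cast h2
        exact mul_pos h1' h2'
      have e1 : ∑ t ∈ range (S + 1),
          (m t : ℝ) * ((t.choose h * (S - t).choose (s - h) : ℕ) : ℝ)
          = ((∑ p ∈ Q h, Nc p.1 p.2 : ℕ) : ℝ) :=
        (hfiber (fun u => ((u.choose h * (S - u).choose (s - h) : ℕ) : ℝ))).symm.trans
          (by exact_mod_cast congrArg (Nat.cast : ℕ → ℝ) (hC3 h))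
      have e2 : ∑ t ∈ range (S + 1),
          (m t : ℝ) * ((t.choose (s - h) * (S - t).choose (s - (s - h)) : ℕ) : ℝ)
          = ((∑ p ∈ Q (s - h), Nc p.1 p.2 : ℕ) : ℝ) :=
        (hfiber (fun u =>
            ((u.choose (s - h) * (S - u).choose (s - (s - h)) : ℕ) : ℝ))).symm.trans
          (by exact_mod_cast congrArg (Nat.cast : ℕ → ℝ) (hC3 (s - h)))
      have e3 : ∑ p ∈ Q (s - h), Nc p.1 p.2 = ∑ p ∈ Q h, Nc p.2 p.1 := by
        rw [hQ]
        simp only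
        rw [Finset.sum_product, Finset.sum_product,
          show s - (s - h) = h by omega]
        exact Finset.sum_comm
      have hQsum : ((∑ p ∈ Q h, (Nc p.1 p.2 + Nc p.2 p.1) : ℕ) : ℝ)
          ≤ (((Q h).filter (fun p => Disjoint p.1 p.2)).card : ℝ)
            * (2 * (L' / 2 ^ s)) := by
        push_cast
        calc ∑ p ∈ Q h, ((Nc p.1 p.2 : ℝ) + (Nc p.2 p.1 : ℝ))
            ≤ ∑ p ∈ Q h, (if Disjoint p.1 p.2 then 2 * (L' / 2 ^ s) else 0) := by
              refine sum_le_sum fun p hp => ?_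
              by_cases hDp : Disjoint p.1 p.2
              · rw [if_pos hDp]
                have hp' := hp
                rw [hQ] at hp'
                obtain ⟨hp1, hp2⟩ := mem_product.mp hp'
                have hc1 : p.1.card = h := (Finset.mem_powersetCard.mp hp1).2
                have hc2 : p.2.card = s - h := (Finset.mem_powersetCard.mp hp2).2
                have hU : (p.1 ∪ p.2).card = s := by
                  rw [card_union_of_disjoint hDp]; omega
                have := hkey_pair p.1 p.2 hU hDp
                simp only [hNc]
                exact this
              · rw [if_neg hDp, hNzero _ _ hDp,
                  hNzero _ _ (fun hD2 => hDp hD2.symm)]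
                simp
          _ = (((Q h).filter (fun p => Disjoint p.1 p.2)).card : ℝ)
              * (2 * (L' / 2 ^ s)) := by
              rw [← Finset.sum_filter, sum_const, nsmul_eq_mul]
      have hQc : (((Q h).filter (fun p => Disjoint p.1 p.2)).card : ℝ)
          = (S.choose s : ℝ) * (s.choose h : ℝ) := by
        rw [hQcard h hh]
        have hcm := Nat.choose_mul (n := S) hh
        push_cast
        exact_mod_cast congrArg (Nat.cast : ℕ → ℝ) hcm.symm
      have hfinal : (S.choose s : ℝ) * (s.choose h : ℝ) * (w h + w (s - h))
          ≤ (S.choose s : ℝ) * (s.choose h : ℝ) * (2 * (L' / 2 ^ s)) := by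
        have hCsh : (s.choose (s - h) : ℝ) = (s.choose h : ℝ) := by
          exact_mod_cast congrArg (Nat.cast : ℕ → ℝ) (Nat.choose_symm hh)
        have h1 := hstepB h hh
        have h2 := hstepB (s - h) (by omega)
        rw [hCsh] at h2
        rw [mul_add, h1, h2, e1, e2]
        have : ((∑ p ∈ Q h, Nc p.1 p.2 : ℕ) : ℝ) + ((∑ p ∈ Q (s - h), Nc p.1 p.2 : ℕ) : ℝ)
            = ((∑ p ∈ Q h, (Nc p.1 p.2 + Nc p.2 p.1) : ℕ) : ℝ) := by
          rw [e3]
          push_cast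
          rw [sum_add_distrib]
        rw [this]
        calc ((∑ p ∈ Q h, (Nc p.1 p.2 + Nc p.2 p.1) : ℕ) : ℝ)
            ≤ (((Q h).filter (fun p => Disjoint p.1 p.2)).card : ℝ)
              * (2 * (L' / 2 ^ s)) := hQsum
          _ = (S.choose s : ℝ) * (s.choose h : ℝ) * (2 * (L' / 2 ^ s)) := by
              rw [hQc]
      have hwineq : w h + w (s - h) ≤ 2 * (L' / 2 ^ s) :=
        le_of_mul_le_mul_left hfinal hchpos
      have hconv : (2 * (L' / 2 ^ s)) / (2 * L') = 1 / 2 ^ s := by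
        rw [mul_div_mul_left _ _ (two_ne_zero : (2:ℝ) ≠ 0), div_div,
          div_eq_div_iff (by positivity) (by positivity)]
        ring
      calc (w h + w (s - h)) / (2 * L')
          ≤ (2 * (L' / 2 ^ s)) / (2 * L') :=
            (div_le_div_iff_of_pos_right (by positivity)).mpr hwineq
        _ = 1 / 2 ^ s := hconv

    -- the objective value
    set Fval : ℝ := ∑ t ∈ Finset.range (S / 2 + 1), ((S - 1).choose t : ℝ) * ν t +
          ∑ t ∈ Finset.Icc (S / 2 + 1) S, ((S - 1).choose (t - 1) : ℝ) * ν t with hFval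
    have hFle : Fval ≤ νstar := hle _ ⟨ν, hν0, hνsymm, hmass, hwin, hFval⟩
    have hFgt : νstar < Fval := by
      have hstep1 : ∀ t ∈ range (S / 2 + 1), ((S - 1).choose t : ℝ) * ν t =
          ((max t (S - t) : ℕ) : ℝ) * ((m t : ℝ) + (m (S - t) : ℝ)) / (2 * S * L') := by
        intro t ht
        have ht' : t < S / 2 + 1 := mem_range.mp ht
        have hmax : max t (S - t) = S - t := max_eq_right (by omega)
        have hid : S.choose t * (S - t) = S * (S - 1).choose t :=
          choose_low (by omega) (by omega)
        have hid' : ((S.choose t : ℝ)) * ((S - t : ℕ) : ℝ)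
            = (S : ℝ) * ((S - 1).choose t : ℝ) := by exact_mod_cast hid
        have hC := hchoose_ne t (by omega)
        have hform : ((S - 1).choose t : ℝ)
            = ((S - t : ℕ) : ℝ) * (S.choose t : ℝ) / (S : ℝ) := by
          rw [eq_div_iff hSR.ne']
          linear_combination -hid'
        have hCpos : (0:ℝ) < (S.choose t : ℝ) := by
          have := Nat.choose_pos (show t ≤ S by omega); exact_mod_cast this
        simp only [hν]
        rw [hmax, hform, div_mul_div_comm, div_eq_div_iff
          (mul_pos hSR (mul_pos (mul_pos two_pos hCpos) hL'pos)).ne'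
          (by positivity : (0:ℝ) < 2 * S * L').ne']
        ring
      have hstep2 : ∀ t ∈ Finset.Icc (S / 2 + 1) S, ((S - 1).choose (t - 1) : ℝ) * ν t =
          ((max t (S - t) : ℕ) : ℝ) * ((m t : ℝ) + (m (S - t) : ℝ)) / (2 * S * L') := by
        intro t ht
        have ht' := mem_Icc.mp ht
        have hmax : max t (S - t) = t := max_eq_left (by omega)
        have hid : S.choose t * t = S * (S - 1).choose (t - 1) :=
          choose_high (by omega) (by omega)
        have hid' : ((S.choose t : ℝ)) * (t : ℝ)
            = (S : ℝ) * ((S - 1).choose (t - 1) : ℝ) := by exact_mod_cast hid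
        have hC := hchoose_ne t (by omega)
        have hform : ((S - 1).choose (t - 1) : ℝ)
            = (t : ℝ) * (S.choose t : ℝ) / (S : ℝ) := by
          rw [eq_div_iff hSR.ne']
          linear_combination -hid'
        have hCpos : (0:ℝ) < (S.choose t : ℝ) := by
          have := Nat.choose_pos (show t ≤ S by omega); exact_mod_cast this
        simp only [hν]
        rw [hmax, hform, div_mul_div_comm, div_eq_div_iff
          (mul_pos hSR (mul_pos (mul_pos two_pos hCpos) hL'pos)).ne'
          (by positivity : (0:ℝ) < 2 * S * L').ne']
        ring
      have hsplit : Fval = ∑ t ∈ range (S + 1),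
          ((max t (S - t) : ℕ) : ℝ) * ((m t : ℝ) + (m (S - t) : ℝ)) / (2 * S * L') := by
        rw [hFval, sum_congr rfl hstep1, sum_congr rfl hstep2]
        rw [range_eq_Ico, ← Finset.Ico_add_one_right_eq_Icc, range_eq_Ico]
        exact Finset.sum_Ico_consecutive _ (by omega) (by omega)
      have hrefl2 : ∑ t ∈ range (S + 1), ((max t (S - t) : ℕ) : ℝ) * (m (S - t) : ℝ) =
          ∑ t ∈ range (S + 1), ((max t (S - t) : ℕ) : ℝ) * (m t : ℝ) := by
        have h0 := Finset.sum_range_reflect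
          (fun t => ((max t (S - t) : ℕ) : ℝ) * (m t : ℝ)) (S + 1)
        simp only [Nat.add_sub_cancel] at h0
        rw [← h0]
        refine sum_congr rfl fun j hj => ?_
        have hjS : j ≤ S := by have := mem_range.mp hj; omega
        have : max (S - j) (S - (S - j)) = max j (S - j) := by
          rw [Nat.sub_sub_self hjS, max_comm]
        rw [this]
      have hbig : ∑ t ∈ range (S + 1), ((max t (S - t) : ℕ) : ℝ) * ((m t : ℝ) + (m (S - t) : ℝ))
          = 2 * ∑ t ∈ range (S + 1), ((max t (S - t) : ℕ) : ℝ) * (m t : ℝ) := by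
        calc ∑ t ∈ range (S + 1), ((max t (S - t) : ℕ) : ℝ) * ((m t : ℝ) + (m (S - t) : ℝ))
            = ∑ t ∈ range (S + 1), (((max t (S - t) : ℕ) : ℝ) * (m t : ℝ)
              + ((max t (S - t) : ℕ) : ℝ) * (m (S - t) : ℝ)) :=
              sum_congr rfl fun t _ => mul_add _ _ _
          _ = _ + _ := sum_add_distrib
          _ = 2 * ∑ t ∈ range (S + 1), ((max t (S - t) : ℕ) : ℝ) * (m t : ℝ) := by
              rw [hrefl2]; ring
      have hF2 : Fval = (∑ t ∈ range (S + 1), ((max t (S - t) : ℕ) : ℝ) * (m t : ℝ))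
          / (S * L') := by
        rw [hsplit, ← sum_div, hbig]
        field_simp
      have hcount : ∑ i ∈ T, ((c i : ℕ) : ℝ) =
          ∑ j : Fin S, ((T.filter (fun i => g i = a (e j) i)).card : ℝ) := by
        have h1 : ∀ i, ((c i : ℕ) : ℝ) = ∑ j : Fin S,
            (if g i = a (e j) i then (1:ℝ) else 0) := by
          intro i
          simp only [hc, hAgr]
          rw [card_filter]
          push_cast
          refine sum_congr rfl fun j _ => ?_
          by_cases hb : a (e j) i = g i
          · simp [hb, eq_comm]
          · have hb' : ¬ (g i = a (e j) i) := fun hx => hb hx.symm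
            simp [hb, hb']
        rw [sum_congr rfl fun i _ => h1 i, sum_comm]
        refine sum_congr rfl fun j _ => ?_
        rw [card_filter]
        push_cast
        rfl
      have hkeys : (S : ℝ) * (νstar * L') < ∑ i ∈ T, ((c i : ℕ) : ℝ) := by
        rw [hcount]
        have hne : (univ : Finset (Fin S)).Nonempty := by
          have : Nonempty (Fin S) := ⟨⟨0, hSpos⟩⟩
          exact univ_nonempty
        have := Finset.sum_lt_sum_of_nonempty hne (f := fun _ : Fin S => νstar * L')
          (fun j _ => he_bad j)
        simpa [card_univ, mul_comm] using this
      have hfib_id : ∑ i ∈ T, ((c i : ℕ) : ℝ) = ∑ t ∈ range (S + 1), (m t : ℝ) * (t : ℝ) :=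
        hfiber (fun t => (t : ℝ))
      have hmono : ∑ t ∈ range (S + 1), (m t : ℝ) * (t : ℝ) ≤
          ∑ t ∈ range (S + 1), ((max t (S - t) : ℕ) : ℝ) * (m t : ℝ) := by
        refine sum_le_sum fun t _ => ?_
        rw [mul_comm]
        refine mul_le_mul_of_nonneg_right ?_ (Nat.cast_nonneg _)
        exact_mod_cast Nat.cast_le.mpr (le_max_left t (S - t))
      rw [hF2, lt_div_iff₀ (by positivity)]
      calc νstar * ((S : ℝ) * L') = (S : ℝ) * (νstar * L') := by ring
        _ < ∑ i ∈ T, ((c i : ℕ) : ℝ) := hkeys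
        _ = ∑ t ∈ range (S + 1), (m t : ℝ) * (t : ℝ) := hfib_id
        _ ≤ _ := hmono
    exact absurd hFle (not_le.mpr hFgt)
  -- assemble the two conclusions
  have hnatcard : Nat.card {k : K //
      ((T.filter (fun i => g i = a k i)).card : ℝ) > νstar * L'} = Bd.card := by
    rw [Nat.card_eq_fintype_card, Fintype.card_subtype]
  have hbdK : Bd.card ≤ Fintype.card K := by
    have := Finset.card_filter_le (univ : Finset K)
      (fun k => ((T.filter (fun i => g i = a k i)).card : ℝ) > νstar * L')
    simpa [hBd, card_univ] using this
  have hnatcard2 : Nat.card {k : K //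
      ((T.filter (fun i => g i = a k i)).card : ℝ) ≤ νstar * L'} =
      Fintype.card K - Bd.card := by
    rw [Nat.card_eq_fintype_card, Fintype.card_subtype]
    have h1 : (univ.filter (fun k : K =>
        ((T.filter (fun i => g i = a k i)).card : ℝ) ≤ νstar * L')) =
        univ.filter (fun k : K =>
        ¬(((T.filter (fun i => g i = a k i)).card : ℝ) > νstar * L')) := by
      apply filter_congr
      intro k _
      simp [not_lt]
    rw [h1, filter_not, card_sdiff_of_subset (filter_subset _ _), card_univ, hBd]
  constructor
  · rw [hnatcard]; exact hmain
  · rw [hnatcard2, ge_iff_le]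
    have hKpos : (0:ℝ) < Fintype.card K := by
      have : 0 < Fintype.card K := by omega
      exact_mod_cast this
    rw [Nat.cast_sub hbdK, sub_div, div_self (ne_of_gt hKpos)]
    have hBdS : (Bd.card : ℝ) ≤ (S : ℝ) := by
      have : Bd.card ≤ S := by omega
      exact_mod_cast this
    have : (Bd.card : ℝ) / Fintype.card K ≤ (S : ℝ) / Fintype.card K :=
      (div_le_div_iff_of_pos_right hKpos).mpr hBdS
    linarith
end

section
/- Fix a real number γ with 0 < γ < 1. For each integer s ≥ 2 let r_s be the unique integer ≥ −1 with P_s(r_s) ≤ γ/2 < P_s(r_s + 1). Then lim_{s→∞} [ P_{s−1}(r_s) + ((s − r_s − 1)/s)·(γ − 2·P_s(r_s)) ] = γ/2. In particular, the optimal fraction of correctly guessed elements n_correct(γ)/(γL) = (1/γ)·[P_{s−1}(r_s) + ((s−r_s−1)/s)(γ − 2P_s(r_s))] tends to 1/2 as s → ∞, as for a truly random sequence. -/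
open Finset Filter

lemma central_sq (n : ℕ) : (2*n+1 : ℝ) * ((2*n).choose n : ℝ)^2 ≤ 16^n := by
  induction n with
  | zero => norm_num
  | succ n ih =>
    have h1 := Nat.add_one_mul_choose_eq (2*n+1) n
    have h2 := Nat.add_one_mul_choose_eq (2*n) n
    have h3 : (2*n+1).choose n = (2*n+1).choose (n+1) := by
      rw [← Nat.choose_symm (by omega : n+1 ≤ 2*n+1)]
      congr 1; omega
    rw [h3] at h1
    have H1 : ((2:ℝ)*n+2) * ((2*n+1).choose (n+1) : ℝ) = ((2*n+2).choose (n+1) : ℝ) * (n+1) := by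
      exact_mod_cast congrArg (Nat.cast (R := ℝ)) h1
    have H2 : ((2:ℝ)*n+1) * ((2*n).choose n : ℝ) = ((2*n+1).choose (n+1) : ℝ) * (n+1) := by
      exact_mod_cast congrArg (Nat.cast (R := ℝ)) h2
    have key : ((n:ℝ)+1)^2 * ((2*n+2).choose (n+1) : ℝ) = (2*n+2)*(2*n+1)*((2*n).choose n : ℝ) := by
      linear_combination (-((n:ℝ)+1)) * H1 - (2*(n:ℝ)+2) * H2
    set C : ℝ := ((2*n).choose n : ℝ) with hC
    have hpos : (0:ℝ) < ((n:ℝ)+1)^4 := by positivity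
    have hp16 : (0:ℝ) ≤ 16^n := by positivity
    have step1 : (2*(n:ℝ)+3)*(2*n+2)^2*(2*n+1) * ((2*(n:ℝ)+1) * C^2)
        ≤ (2*(n:ℝ)+3)*(2*n+2)^2*(2*n+1) * 16^n :=
      mul_le_mul_of_nonneg_left ih (by positivity)
    have step2 : (2*(n:ℝ)+3)*(2*n+2)^2*(2*n+1) * 16^n ≤ 16*((n:ℝ)+1)^4*16^n := by
      nlinarith [hp16]
    have hgoal : ((n:ℝ)+1)^4 * ((2*((n:ℝ)+1)+1) * ((2*n+2).choose (n+1) : ℝ)^2)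
        ≤ ((n:ℝ)+1)^4 * 16^(n+1) := by
      have expand : ((n:ℝ)+1)^4 * ((2*((n:ℝ)+1)+1) * ((2*n+2).choose (n+1) : ℝ)^2)
          = (2*(n:ℝ)+3) * ((((n:ℝ)+1)^2 * ((2*n+2).choose (n+1) : ℝ)))^2 := by ring
      rw [expand, key]
      nlinarith [step1, step2, pow_succ (16:ℝ) n]
    have h5 := (mul_le_mul_iff_right₀ hpos).mp hgoal
    have e2 : ((2*(n+1)).choose (n+1)) = (2*n+2).choose (n+1) := by
      rw [show 2*(n+1) = 2*n+2 from by ring]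
    rw [e2]; push_cast; linarith [h5]

lemma middle_sq_bound (s : ℕ) : ((s:ℝ)+1) * (s.choose (s/2) : ℝ)^2 ≤ 2 * (2^s)^2 := by
  rcases Nat.even_or_odd s with ⟨n, hn⟩ | ⟨n, hn⟩
  · subst hn
    have h := central_sq n
    have e2 : n + n = 2*n := by ring
    rw [e2, show (2*n)/2 = n from by omega]
    have : ((2:ℝ)^(2*n))^2 = 16^n := by
      rw [← pow_mul, show (16:ℝ) = 2^4 from by norm_num, ← pow_mul]; ring_nf
    push_cast
    rw [this]
    nlinarith [h, sq_nonneg ((2*n).choose n : ℝ), pow_nonneg (by norm_num : (0:ℝ) ≤ 16) n]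
  · subst hn
    have h := central_sq n
    have e : (2*n+1)/2 = n := by omega
    rw [e]
    have hle : (2*n+1).choose n ≤ 2 * (2*n).choose n := by
      have h3 : (2*n+1).choose n = (2*n+1).choose (n+1) := by
        rw [← Nat.choose_symm (by omega : n+1 ≤ 2*n+1)]; congr 1; omega
      rw [h3, Nat.choose_succ_succ']
      have := Nat.choose_le_middle (n+1) (2*n)
      rw [show (2*n)/2 = n from by omega] at this
      omega
    have hleR : ((2*n+1).choose n : ℝ) ≤ 2 * ((2*n).choose n : ℝ) := by exact_mod_cast hle
    have hcnn : (0:ℝ) ≤ ((2*n+1).choose n : ℝ) := Nat.cast_nonneg _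
    have hsq : ((2*n+1).choose n : ℝ)^2 ≤ 4 * ((2*n).choose n : ℝ)^2 := by nlinarith
    have : ((2:ℝ)^(2*n+1))^2 = 4 * 16^n := by
      rw [← pow_mul, show (16:ℝ) = 2^4 from by norm_num, ← pow_mul]; ring_nf
    push_cast
    rw [this]
    nlinarith [h, sq_nonneg ((2*n).choose n : ℝ), pow_nonneg (by norm_num : (0:ℝ) ≤ 16) n]

lemma choose_div_le_sqrt (s j : ℕ) : (s.choose j : ℝ) / 2^s ≤ Real.sqrt (2/(s+1)) := by
  have h2s : (0:ℝ) < 2^s := by positivity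
  have hx : (0:ℝ) ≤ (s.choose j : ℝ) / 2^s := by positivity
  have hy : (0:ℝ) ≤ 2/((s:ℝ)+1) := by positivity
  rw [Real.le_sqrt hx hy, div_pow, div_le_div_iff₀ (by positivity) (by positivity)]
  have h1 : (s.choose j : ℝ) ≤ (s.choose (s/2) : ℝ) := by exact_mod_cast Nat.choose_le_middle j s
  have h2 := middle_sq_bound s
  have hsq : ((s.choose j : ℝ))^2 ≤ ((s.choose (s/2) : ℝ))^2 :=
    pow_le_pow_left₀ (Nat.cast_nonneg _) h1 2
  have h4 := mul_le_mul_of_nonneg_left hsq (by positivity : (0:ℝ) ≤ (s:ℝ)+1)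
  linarith

lemma pascal_sum (m t : ℕ) :
    ∑ j ∈ range (t+1), (m+1).choose j
      = ∑ j ∈ range (t+1), m.choose j + ∑ j ∈ range t, m.choose j := by
  induction t with
  | zero => simp
  | succ t ih =>
    simp only [sum_range_succ, Nat.choose_succ_succ'] at *
    omega

theorem stmt4 (γ : ℝ) (hγ0 : 0 < γ) (hγ1 : γ < 1)
    (r : ℕ → ℤ) (hr : ∀ s : ℕ, 2 ≤ s → -1 ≤ r s)
    (hr1 : ∀ s : ℕ, 2 ≤ s → binomCDF s (r s) ≤ γ / 2)
    (hr2 : ∀ s : ℕ, 2 ≤ s → γ / 2 < binomCDF s (r s + 1)) :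
    Tendsto (fun s : ℕ =>
        binomCDF (s - 1) (r s) + ((s : ℝ) - r s - 1) / s * (γ - 2 * binomCDF s (r s)))
      atTop (nhds (γ / 2)) ∧
    Tendsto (fun s : ℕ =>
        (1 / γ) *
          (binomCDF (s - 1) (r s) + ((s : ℝ) - r s - 1) / s * (γ - 2 * binomCDF s (r s))))
      atTop (nhds (1 / 2)) := by
  set E : ℕ → ℝ := fun s =>
    binomCDF (s - 1) (r s) + ((s : ℝ) - r s - 1) / s * (γ - 2 * binomCDF s (r s)) with hE
  -- the bounding sequence tends to 0
  have t1 : Tendsto (fun s : ℕ => (2:ℝ)/(s:ℝ)) atTop (nhds 0) :=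
    tendsto_const_div_atTop_nhds_zero_nat 2
  have t2 : Tendsto (fun s : ℕ => Real.sqrt ((2:ℝ)/(s:ℝ))) atTop (nhds 0) := by
    have := (Real.continuous_sqrt.tendsto 0).comp t1
    simp only [Function.comp_def, Real.sqrt_zero] at this
    exact this
  have hM : Tendsto (fun s : ℕ => 4 * Real.sqrt ((2:ℝ)/(s:ℝ))) atTop (nhds 0) := by
    have := t2.const_mul (4:ℝ)
    simpa only [mul_zero] using this
  -- eventually 1/2^s is small
  have hsmall : ∀ᶠ s : ℕ in atTop, ((1:ℝ)/2)^s < γ/2 :=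
    Tendsto.eventually_lt_const (half_pos hγ0)
      (tendsto_pow_atTop_nhds_zero_of_lt_one (by norm_num) (by norm_num))
  -- main eventual bound
  have hev : ∀ᶠ s : ℕ in atTop, ‖E s - γ/2‖ ≤ 4 * Real.sqrt ((2:ℝ)/(s:ℝ)) := by
    filter_upwards [eventually_ge_atTop 2, hsmall] with s hs2 hsm
    have hb := hr1 s hs2
    have hb2 := hr2 s hs2
    have hrs := hr s hs2
    have h2pow : ((1:ℝ)/2)^s = 1/2^s := by rw [div_pow, one_pow]
    -- r s ≥ 0
    have ht0 : 0 ≤ r s := by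
      by_contra h
      push_neg at h
      have hneg : r s = -1 := by omega
      rw [hneg] at hb2
      have : binomCDF s (-1 + 1) = 1/2^s := by
        rw [show (-1 + 1 : ℤ) = 0 from by ring, binomCDF]
        norm_num
      rw [this] at hb2
      rw [h2pow] at hsm
      linarith
    -- r s < s
    have hts : r s < (s : ℤ) := by
      by_contra h
      push_neg at h
      have hbig : s + 1 ≤ (r s).toNat + 1 := by omega
      have hsub : range (s+1) ⊆ range ((r s).toNat + 1) := range_subset_range.mpr hbig
      have hsum : (2:ℝ)^s ≤ ∑ j ∈ range ((r s).toNat + 1), (s.choose j : ℝ) := by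
        have hcast : (∑ j ∈ range (s+1), (s.choose j : ℝ)) = 2^s := by
          exact_mod_cast congrArg (Nat.cast (R := ℝ)) (Nat.sum_range_choose s)
        rw [← hcast]
        exact sum_le_sum_of_subset_of_nonneg hsub (fun i _ _ => Nat.cast_nonneg _)
      have h1le : (1:ℝ) ≤ binomCDF s (r s) := by
        rw [binomCDF, if_neg (not_lt.mpr ht0), le_div_iff₀ (by positivity)]
        simpa using hsum
      linarith
    set k := (r s).toNat with hkdef
    have hk : (r s : ℤ) = (k : ℤ) := by omega
    have hk1 : k + 1 ≤ s := by omega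
    set m := s - 1 with hmdef
    have hm : s = m + 1 := by omega
    set M := Real.sqrt ((2:ℝ)/(s:ℝ)) with hMdef
    have hMnn : 0 ≤ M := Real.sqrt_nonneg _
    -- key sqrt bounds
    have hM1 : (s.choose (k+1) : ℝ)/2^s ≤ M := by
      refine (choose_div_le_sqrt s (k+1)).trans (Real.sqrt_le_sqrt ?_)
      have hs0 : (0:ℝ) < (s:ℝ) := by positivity
      apply div_le_div_of_nonneg_left (by norm_num) hs0 (by linarith)
    have hM2 : (m.choose k : ℝ)/2^m ≤ M := by
      refine (choose_div_le_sqrt m k).trans (le_of_eq ?_)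
      congr 2
      rw [hm]; push_cast; ring
    -- express binomCDF values
    have hbeq : binomCDF s (r s) = (∑ j ∈ range (k+1), (s.choose j : ℝ)) / 2^s := by
      rw [binomCDF, if_neg (not_lt.mpr ht0)]
    have htn1 : (r s + 1).toNat = k + 1 := by omega
    have hbeq1 : binomCDF s (r s + 1) = (∑ j ∈ range (k+2), (s.choose j : ℝ)) / 2^s := by
      rw [binomCDF, if_neg (by omega), htn1]
    have hdeq : binomCDF (s-1) (r s) = (∑ j ∈ range (k+1), (m.choose j : ℝ)) / 2^m := by
      rw [binomCDF, if_neg (not_lt.mpr ht0)]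
    -- Pascal
    have hps : (∑ j ∈ range (k+1), (s.choose j : ℝ))
        = ∑ j ∈ range (k+1), (m.choose j : ℝ) + ∑ j ∈ range k, (m.choose j : ℝ) := by
      rw [hm]
      exact_mod_cast congrArg (Nat.cast (R := ℝ)) (pascal_sum m k)
    have hS1 : (∑ j ∈ range (k+1), (m.choose j : ℝ)) - ∑ j ∈ range k, (m.choose j : ℝ)
        = (m.choose k : ℝ) := by rw [sum_range_succ]; ring
    -- d - b
    have hdb : binomCDF (s-1) (r s) - binomCDF s (r s) = (m.choose k : ℝ) / 2^s := by
      rw [hdeq, hbeq, hps, hm, ← hS1, pow_succ]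
      have h2m : (2:ℝ)^m ≠ 0 := by positivity
      field_simp
      ring
    -- bound on gamma/2 - b
    have hbub : γ/2 - binomCDF s (r s) ≤ (s.choose (k+1) : ℝ)/2^s := by
      have hsplit : binomCDF s (r s + 1) = binomCDF s (r s) + (s.choose (k+1) : ℝ)/2^s := by
        rw [hbeq1, hbeq, show k+2 = (k+1)+1 from rfl, sum_range_succ]
        ring
      rw [hsplit] at hb2
      linarith
    -- bound on d - b
    have hdb2 : (m.choose k : ℝ)/2^s ≤ (m.choose k : ℝ)/2^m := by
      apply div_le_div_of_nonneg_left (Nat.cast_nonneg _) (by positivity)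
      exact pow_le_pow_right₀ (by norm_num) (by omega)
    have hdb0 : (0:ℝ) ≤ (m.choose k : ℝ)/2^s := by positivity
    -- the factor q
    set q : ℝ := ((s:ℝ) - (r s : ℤ) - 1)/s with hqdef
    have hrsR : ((r s : ℤ) : ℝ) = (k : ℝ) := by rw [hk]; push_cast; ring
    have hspos : (0:ℝ) < (s:ℝ) := by positivity
    have hq0 : 0 ≤ q := by
      apply div_nonneg _ (le_of_lt hspos)
      rw [hrsR]
      have : (k:ℝ) + 1 ≤ (s:ℝ) := by exact_mod_cast hk1
      linarith
    have hq1 : q ≤ 1 := by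
      rw [hqdef, div_le_one hspos, hrsR]
      have : (0:ℝ) ≤ (k:ℝ) := Nat.cast_nonneg _
      linarith
    -- the factor w
    have hw0 : 0 ≤ γ - 2 * binomCDF s (r s) := by linarith
    have hw2 : γ - 2 * binomCDF s (r s) ≤ 2 * M := by linarith [hbub, hM1]
    have hqw0 : 0 ≤ q * (γ - 2 * binomCDF s (r s)) := mul_nonneg hq0 hw0
    have hqw2 : q * (γ - 2 * binomCDF s (r s)) ≤ 2 * M := by
      calc q * (γ - 2 * binomCDF s (r s)) ≤ 1 * (γ - 2 * binomCDF s (r s)) :=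
            mul_le_mul_of_nonneg_right hq1 hw0
        _ = γ - 2 * binomCDF s (r s) := by ring
        _ ≤ 2 * M := hw2
    -- |gamma/2 - b| <= M
    have hgb : γ/2 - binomCDF s (r s) ≤ M := le_trans hbub hM1
    -- assemble
    have hEeq : E s - γ/2 = (binomCDF (s-1) (r s) - binomCDF s (r s))
        + (binomCDF s (r s) - γ/2) + q * (γ - 2 * binomCDF s (r s)) := by
      simp only [hE]
      ring
    rw [Real.norm_eq_abs, hEeq, hdb]
    rw [abs_le]
    constructor
    · linarith [hdb0, hdb2, hM2, hgb, hqw0, hMnn]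
    · linarith [hdb0, hdb2, hM2, hgb, hqw2, hb, hMnn]
  have hE0 : Tendsto (fun s => E s - γ/2) atTop (nhds 0) := squeeze_zero_norm' hev hM
  have hEt : Tendsto E atTop (nhds (γ/2)) := by
    have := hE0.add_const (γ/2)
    simpa using this
  refine ⟨hEt, ?_⟩
  have h2 := hEt.const_mul (1/γ)
  have hval : (1/γ) * (γ/2) = 1/2 := by field_simp
  rwa [hval] at h2
end

section
/- Let L be a prime with L ≡ 3 (mod 4). Define ā : ZMod L → {0,1} by ā(i) = 1 if i ≠ 0 and i is a quadratic residue modulo L (i.e. i = y² for some y ∈ ZMod L), and ā(i) = 0 otherwise. Then for all distinct i₁, i₂ ∈ ZMod L and all bits b₁, b₂ ∈ {0,1}, the pattern count d_{i₁,i₂}(b₁,b₂) = #{ j ∈ ZMod L : ā(j + i₁) = b₁ and ā(j + i₂) = b₂ } equals (L−3)/4 if (b₁,b₂) = (1,1), and equals (L+1)/4 otherwise. -/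
/-- The Legendre-sequence predicate: `legSeq L i` holds iff `i` is a nonzero quadratic
residue modulo `L`; the binary sequence `ā` takes value `1` exactly where this holds. -/
def legSeq (L : ℕ) (i : ZMod L) : Prop := i ≠ 0 ∧ IsSquare i

open Finset

section Stmt14Aux

variable {L : ℕ} [Fact (Nat.Prime L)]

private lemma stmt14_sum_shift (h2 : ringChar (ZMod L) ≠ 2) (a : ZMod L) :
    ∑ j : ZMod L, quadraticChar (ZMod L) (j + a) = 0 := by
  exact (Fintype.sum_equiv (Equiv.addRight a) _ _ fun j => rfl).trans
    (quadraticChar_sum_zero h2)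

private lemma stmt14_sum_mul_shift (h2 : ringChar (ZMod L) ≠ 2) {c : ZMod L} (hc : c ≠ 0) :
    ∑ j : ZMod L, quadraticChar (ZMod L) j * quadraticChar (ZMod L) (j + c) = -1 := by
  classical
  set χ := quadraticChar (ZMod L) with hχ
  have h0 : χ (0 : ZMod L) * χ ((0 : ZMod L) + c) = 0 := by
    rw [quadraticChar_zero, zero_mul]
  have herase := Finset.sum_erase (f := fun j => χ j * χ (j + c)) univ h0
  rw [← herase]
  have key : ∑ j ∈ univ.erase (0 : ZMod L), χ j * χ (j + c)
      = ∑ u ∈ univ.erase (1 : ZMod L), χ u := by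
    refine Finset.sum_nbij' (fun j => 1 + c * j⁻¹) (fun u => c * (u - 1)⁻¹) ?_ ?_ ?_ ?_ ?_
    · intro a ha
      rw [mem_erase] at ha ⊢
      refine ⟨?_, mem_univ _⟩
      intro h
      have : c * a⁻¹ = 0 := by linear_combination h
      rcases mul_eq_zero.mp this with h' | h'
      · exact hc h'
      · exact ha.1 (inv_eq_zero.mp h')
    · intro u hu
      rw [mem_erase] at hu ⊢
      refine ⟨?_, mem_univ _⟩
      exact mul_ne_zero hc (inv_ne_zero (sub_ne_zero.mpr hu.1))
    · intro a ha
      rw [mem_erase] at ha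
      have ha1 : a ≠ 0 := ha.1
      field_simp
      simp [hc]
    · intro u hu
      rw [mem_erase] at hu
      have hu1 : u - 1 ≠ 0 := sub_ne_zero.mpr hu.1
      field_simp
      ring
    · intro a ha
      rw [mem_erase] at ha
      have ha1 : a ≠ 0 := ha.1
      have harg : a + c = a * (1 + c * a⁻¹) := by
        field_simp
      rw [harg, map_mul, ← mul_assoc, ← pow_two, quadraticChar_sq_one ha1, one_mul]
  rw [key, Finset.sum_erase_eq_sub (mem_univ _), quadraticChar_sum_zero h2, map_one]
  ring

end Stmt14Aux

theorem stmt14 (L : ℕ) (hL : Nat.Prime L) (hmod : L % 4 = 3)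
    (i₁ i₂ : ZMod L) (hne : i₁ ≠ i₂) (b₁ b₂ : Bool) :
    Nat.card {j : ZMod L //
        (legSeq L (j + i₁) ↔ b₁ = true) ∧ (legSeq L (j + i₂) ↔ b₂ = true)} =
      if b₁ = true ∧ b₂ = true then (L - 3) / 4 else (L + 1) / 4 := by
  classical
  haveI : Fact (Nat.Prime L) := ⟨hL⟩
  haveI : NeZero L := ⟨hL.pos.ne'⟩
  have h2 : ringChar (ZMod L) ≠ 2 := by
    rw [ZMod.ringChar_zmod_n]; omega
  set χ := quadraticChar (ZMod L) with hχdef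
  set D : ZMod L → ℤ := fun x => if x = 0 then 1 else 0 with hD
  set e : Bool → ℤ := fun b => if b then 1 else -1 with he
  -- indicator identity
  have hind : ∀ (b : Bool) (x : ZMod L),
      (if legSeq L x ↔ b = true then (2:ℤ) else 0)
        = 1 + e b * χ x - e b * D x := by
    intro b x
    by_cases hx : x = 0
    · subst hx
      have h0 : ¬ legSeq L (0 : ZMod L) := fun h => h.1 rfl
      have hc0 : χ (0 : ZMod L) = 0 := quadraticChar_zero
      cases b <;> simp [h0, hc0, hD, he]
    · by_cases hs : IsSquare x
      · have h1 : χ x = 1 := (quadraticChar_one_iff_isSquare hx).mpr hs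
        have hl : legSeq L x := ⟨hx, hs⟩
        cases b <;> simp [hl, h1, hx, hD, he]
      · have h1 : χ x = -1 := quadraticChar_neg_one_iff_not_isSquare.mpr hs
        have hl : ¬ legSeq L x := fun h => hs h.2
        cases b <;> simp [hl, h1, hx, hD, he]
  set N := Nat.card {j : ZMod L //
      (legSeq L (j + i₁) ↔ b₁ = true) ∧ (legSeq L (j + i₂) ↔ b₂ = true)} with hNdef
  have hN : (N : ℤ) = ∑ j : ZMod L,
      if (legSeq L (j + i₁) ↔ b₁ = true) ∧ (legSeq L (j + i₂) ↔ b₂ = true)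
        then (1:ℤ) else 0 := by
    rw [hNdef, Nat.card_eq_fintype_card, Fintype.card_subtype, Finset.card_filter]
    push_cast
    rfl
  -- component sums
  have hone : ∑ _j : ZMod L, (1:ℤ) = L := by
    simp [Finset.card_univ, ZMod.card]
  have hs1 : ∑ j : ZMod L, χ (j + i₁) = 0 := stmt14_sum_shift h2 i₁
  have hs2 : ∑ j : ZMod L, χ (j + i₂) = 0 := stmt14_sum_shift h2 i₂
  have hd1 : ∑ j : ZMod L, D (j + i₁) = 1 := by
    rw [Finset.sum_eq_single (-i₁)]
    · simp [hD]
    · intro b _ hb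
      simp only [hD]
      rw [if_neg]
      intro h
      exact hb (by linear_combination h)
    · simp
  have hd2 : ∑ j : ZMod L, D (j + i₂) = 1 := by
    rw [Finset.sum_eq_single (-i₂)]
    · simp [hD]
    · intro b _ hb
      simp only [hD]
      rw [if_neg]
      intro h
      exact hb (by linear_combination h)
    · simp
  have hcd : i₂ - i₁ ≠ 0 := sub_ne_zero.mpr hne.symm
  have hmm : ∑ j : ZMod L, χ (j + i₁) * χ (j + i₂) = -1 := by
    rw [Fintype.sum_equiv (Equiv.addRight i₁) _
      (fun k => χ k * χ (k + (i₂ - i₁))) (fun j => by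
        simp only [Equiv.coe_addRight]
        congr 1
        congr 1
        ring)]
    exact stmt14_sum_mul_shift h2 hcd
  have hneg1 : χ (-1 : ZMod L) = -1 := by
    rw [hχdef, quadraticChar_neg_one h2, ZMod.card]
    exact ZMod.χ₄_nat_three_mod_four hmod
  have hcross : χ (i₂ - i₁) = - χ (i₁ - i₂) := by
    rw [show i₂ - i₁ = (-1) * (i₁ - i₂) by ring, map_mul, hneg1]
    ring
  have hcd1 : ∑ j : ZMod L, χ (j + i₁) * D (j + i₂) = χ (i₁ - i₂) := by
    rw [Finset.sum_eq_single (-i₂)]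
    · simp only [hD]
      rw [if_pos (by ring), mul_one]
      congr 1
      ring
    · intro b _ hb
      simp only [hD]
      rw [if_neg fun h => hb (by linear_combination h), mul_zero]
    · simp
  have hcd2 : ∑ j : ZMod L, D (j + i₁) * χ (j + i₂) = χ (i₂ - i₁) := by
    rw [Finset.sum_eq_single (-i₁)]
    · simp only [hD]
      rw [if_pos (by ring), one_mul]
      congr 1
      ring
    · intro b _ hb
      simp only [hD]
      rw [if_neg fun h => hb (by linear_combination h), zero_mul]
    · simp
  have hdd : ∑ j : ZMod L, D (j + i₁) * D (j + i₂) = 0 := by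
    refine Finset.sum_eq_zero fun j _ => ?_
    simp only [hD]
    split_ifs with ha hb <;>
      first
      | exact absurd (by linear_combination ha - hb : i₁ = i₂) hne
      | ring
  -- main character-sum computation
  have hmain : (4:ℤ) * N = (L : ℤ) - e b₁ - e b₂ - e b₁ * e b₂ := by
    have step : (4:ℤ) * N = ∑ j : ZMod L,
        (1 + e b₁ * χ (j + i₁) - e b₁ * D (j + i₁)) *
        (1 + e b₂ * χ (j + i₂) - e b₂ * D (j + i₂)) := by
      rw [hN, Finset.mul_sum]
      refine Finset.sum_congr rfl fun j _ => ?_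
      rw [← hind b₁ (j + i₁), ← hind b₂ (j + i₂)]
      by_cases ha : legSeq L (j + i₁) ↔ b₁ = true <;>
        by_cases hb : legSeq L (j + i₂) ↔ b₂ = true
      · rw [if_pos ⟨ha, hb⟩, if_pos ha, if_pos hb]; norm_num
      · rw [if_neg (fun h => hb h.2), if_pos ha, if_neg hb]; norm_num
      · rw [if_neg (fun h => ha h.1), if_neg ha]; norm_num
      · rw [if_neg (fun h => ha h.1), if_neg ha]; norm_num
    rw [step]
    have expand : ∀ j : ZMod L,
        (1 + e b₁ * χ (j + i₁) - e b₁ * D (j + i₁)) *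
        (1 + e b₂ * χ (j + i₂) - e b₂ * D (j + i₂))
        = 1 + e b₁ * χ (j + i₁) + e b₂ * χ (j + i₂)
          + (e b₁ * e b₂) * (χ (j + i₁) * χ (j + i₂))
          - e b₁ * D (j + i₁) - e b₂ * D (j + i₂)
          - (e b₁ * e b₂) * (χ (j + i₁) * D (j + i₂))
          - (e b₁ * e b₂) * (D (j + i₁) * χ (j + i₂))
          + (e b₁ * e b₂) * (D (j + i₁) * D (j + i₂)) := fun j => by ring
    rw [Finset.sum_congr rfl (fun j _ => expand j)]
    simp only [Finset.sum_add_distrib, Finset.sum_sub_distrib, ← Finset.mul_sum]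
    rw [hone, hs1, hs2, hmm, hd1, hd2, hcd1, hcd2, hdd, hcross]
    ring
  have hL3 : 3 ≤ L := by omega
  cases b₁ <;> cases b₂ <;> simp [he] at hmain ⊢ <;> omega
end
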